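/- arXiv:1402.3018 — 5 statements merged into one kernel-verified Lean document; each statement's English description precedes it below -/
import Mathlib

section
/- Let k be a field and let Y be a finite subset of k^n with |Y| = s ≥ 1 and let m ≥ 1. Then for every integer d ≥ 2ms − m − s, HF^m(Y, d) = C(m+n−1, n) · s, where C(m+n−1, n) is the binomial coefficient. -/
open MvPolynomial

noncomputable section

/-- The affine Hilbert function of an ideal `I`: the dimension of
`A_{≤d} / I_{≤d}`. -/
def affineHF {k : Type*} [Field k] {n : ℕ} (I : Ideal (MvPolynomial (Fin n) k)) (d : ℕ) : ℕ :=
  Module.finrank k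
    ((MvPolynomial.restrictTotalDegree (Fin n) k d) ⧸
      (Submodule.comap (MvPolynomial.restrictTotalDegree (Fin n) k d).subtype
        (Submodule.restrictScalars k I)))

/-- The affine Hilbert function of a set `X ⊆ k^n`. -/
def HF {k : Type*} [Field k] {n : ℕ} (X : Set (Fin n → k)) (d : ℕ) : ℕ :=
  affineHF (MvPolynomial.vanishingIdeal k X) d

/-- The degree `d` closure of `Y ⊆ k^n`. -/
def clDeg {k : Type*} [Field k] {n : ℕ} (d : ℕ) (Y : Set (Fin n → k)) :
    Set (Fin n → k) :=
  {x | ∀ P : MvPolynomial (Fin n) k, P.totalDegree ≤ d →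
    (∀ y ∈ Y, MvPolynomial.eval y P = 0) → MvPolynomial.eval x P = 0}

/-- The ideal `I^m(X)` of polynomials vanishing to order at least `m`
at every point of `X`. -/
def orderIdeal {k : Type*} [Field k] {n : ℕ} (m : ℕ) (X : Set (Fin n → k)) :
    Ideal (MvPolynomial (Fin n) k) :=
  ⨅ x ∈ X, (MvPolynomial.vanishingIdeal k ({x} : Set (Fin n → k))) ^ m

/-- The Hilbert function with multiplicity `m` of a set `X ⊆ k^n`. -/
def HFm {k : Type*} [Field k] {n : ℕ} (m : ℕ) (X : Set (Fin n → k)) (d : ℕ) : ℕ :=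
  affineHF (orderIdeal m X) d

/-- `cl_d^{ℓ,m}(Y)`: points where all degree-`≤ d` polynomials vanishing
to order `m` on `Y` vanish to order `ℓ`. -/
def clDegMult {k : Type*} [Field k] {n : ℕ} (d l m : ℕ) (Y : Set (Fin n → k)) :
    Set (Fin n → k) :=
  {x | ∀ P : MvPolynomial (Fin n) k, P.totalDegree ≤ d → P ∈ orderIdeal m Y →
    P ∈ (MvPolynomial.vanishingIdeal k ({x} : Set (Fin n → k))) ^ l}

/-- An affine line in `k^n`. -/
def IsAffineLine {k : Type*} [Field k] {n : ℕ} (L : Set (Fin n → k)) : Prop :=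
  ∃ a v : Fin n → k, v ≠ 0 ∧ L = {p | ∃ t : k, p = a + t • v}

/-- A curve of degree at most `Λ` in `k^n`. -/
def IsCurveOfDegree {k : Type*} [Field k] {n : ℕ} (Λ : ℕ) (C : Set (Fin n → k)) : Prop :=
  ∃ f : Fin n → Polynomial k, (∀ i, (f i).natDegree ≤ Λ) ∧
    C = Set.range fun t : k => fun i => (f i).eval t


namespace Aux14

variable {k : Type*} [Field k] {n : ℕ}


/-- Translation substitution. -/
def tau (y : Fin n → k) : MvPolynomial (Fin n) k →ₐ[k] MvPolynomial (Fin n) k :=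
  bind₁ (fun i => X i + C (y i))

lemma tau_tau (y y' : Fin n → k) (f : MvPolynomial (Fin n) k) :
    tau y (tau y' f) = tau (y + y') f := by
  show bind₁ _ (bind₁ _ f) = _
  rw [bind₁_bind₁]
  have : (fun i => (bind₁ fun i => X i + C (y i)) (X i + C (y' i)))
      = fun i => X i + C ((y + y') i) := by
    funext i
    simp [map_add, bind₁_X_right, algHom_C, C_add, add_assoc]
  rw [this]
  rfl

lemma tau_zero (f : MvPolynomial (Fin n) k) : tau (0 : Fin n → k) f = f := by
  show bind₁ _ f = f
  have : (fun i => X i + C ((0 : Fin n → k) i)) = (X : Fin n → MvPolynomial (Fin n) k) := by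
    funext i; simp
  rw [this, bind₁_X_left]
  rfl

lemma tau_neg_tau (y : Fin n → k) (f : MvPolynomial (Fin n) k) :
    tau (-y) (tau y f) = f := by
  rw [tau_tau]
  simp [tau_zero]

lemma eval_bind1 (x : Fin n → k) (g : Fin n → MvPolynomial (Fin n) k)
    (f : MvPolynomial (Fin n) k) :
    eval x (bind₁ g f) = eval (fun i => eval x (g i)) f := by
  induction f using MvPolynomial.induction_on with
  | C a => simp
  | add p q hp hq => simp [hp, hq]
  | mul_X p i hp => simp [hp]

lemma eval_tau (x y : Fin n → k) (f : MvPolynomial (Fin n) k) :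
    eval x (tau y f) = eval (x + y) f := by
  rw [tau, eval_bind1]
  have : (fun i => eval x (X i + C (y i))) = x + y := by
    funext i
    simp
  rw [this]

lemma totalDegree_bind1_le (g : Fin n → MvPolynomial (Fin n) k)
    (hg : ∀ i, (g i).totalDegree ≤ 1) (f : MvPolynomial (Fin n) k) :
    (bind₁ g f).totalDegree ≤ f.totalDegree := by
  conv_lhs => rw [f.as_sum, map_sum]
  apply totalDegree_finsetSum_le
  intro v hv
  rw [bind₁_monomial]
  calc (C (coeff v f) * ∏ i ∈ v.support, g i ^ v i).totalDegree
      ≤ (C (coeff v f) : MvPolynomial (Fin n) k).totalDegree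
        + (∏ i ∈ v.support, g i ^ v i).totalDegree := totalDegree_mul _ _
    _ ≤ 0 + ∑ i ∈ v.support, (g i ^ v i).totalDegree := by
        gcongr
        · exact le_of_eq (totalDegree_C _)
        · exact totalDegree_finset_prod _ _
    _ ≤ ∑ i ∈ v.support, v i * 1 := by
        rw [zero_add]
        apply Finset.sum_le_sum
        intro i _
        exact (totalDegree_pow _ _).trans (Nat.mul_le_mul_left _ (hg i))
    _ ≤ f.totalDegree := by
        simp only [mul_one]
        exact le_totalDegree hv

lemma totalDegree_tau_le (y : Fin n → k) (f : MvPolynomial (Fin n) k) :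
    (tau y f).totalDegree ≤ f.totalDegree := by
  apply totalDegree_bind1_le
  intro i
  refine (totalDegree_add _ _).trans ?_
  simp [totalDegree_X, totalDegree_C]


variable {k : Type*} [Field k] {n : ℕ}

lemma X_mem_m0 (i : Fin n) : X i ∈ vanishingIdeal k ({0} : Set (Fin n → k)) := by
  rw [mem_vanishingIdeal_singleton_iff]
  simp

lemma prod_pow_mem {R : Type*} [CommRing R] (I : Ideal R) {ι : Type*} (t : Finset ι)
    (e : ι → ℕ) (p : ι → R) (h : ∀ i ∈ t, p i ∈ I ^ (e i)) :
    (∏ i ∈ t, p i) ∈ I ^ (∑ i ∈ t, e i) := by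
  classical
  induction t using Finset.cons_induction with
  | empty => simp [Ideal.one_eq_top]
  | cons a s ha ih =>
      rw [Finset.prod_cons, Finset.sum_cons, pow_add]
      exact Ideal.mul_mem_mul (h a (Finset.mem_cons_self a s))
        (ih fun i hi => h i (Finset.mem_cons_of_mem hi))

lemma monomial_mem_m0_pow {m : ℕ} {u : Fin n →₀ ℕ} (c : k)
    (hu : m ≤ u.sum fun _ e => e) :
    monomial u c ∈ (vanishingIdeal k ({0} : Set (Fin n → k))) ^ m := by
  rw [monomial_eq]
  apply Ideal.mul_mem_left
  have h1 : (Finsupp.prod u fun i e => (X i : MvPolynomial (Fin n) k) ^ e)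
      ∈ (vanishingIdeal k ({0} : Set (Fin n → k))) ^ (u.sum fun _ e => e) :=
    prod_pow_mem _ _ _ _ (fun i _ => Ideal.pow_mem_pow (X_mem_m0 i) _)
  exact Ideal.pow_le_pow_right hu h1

lemma one_le_wt_of_mem_m0 {q : MvPolynomial (Fin n) k}
    (hq : q ∈ vanishingIdeal k ({0} : Set (Fin n → k))) {b : Fin n →₀ ℕ}
    (hb : b ∈ q.support) : 1 ≤ b.sum fun _ e => e := by
  by_contra hlt
  push_neg at hlt
  have hb0 : b = 0 := by
    have h0 : ∀ i ∈ b.support, b i = 0 :=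
      Finset.sum_eq_zero_iff.mp (Nat.lt_one_iff.mp hlt)
    ext i
    by_cases hi : i ∈ b.support
    · exact h0 i hi
    · simpa using (Finsupp.notMem_support_iff.mp hi)
  have : eval (0 : Fin n → k) q = 0 := (mem_vanishingIdeal_singleton_iff _ _).mp hq
  rw [eval_zero] at this
  rw [constantCoeff_eq] at this
  rw [hb0] at hb
  exact (mem_support_iff.mp hb) this

lemma wt_ge_of_mem_m0_pow {m : ℕ} {f : MvPolynomial (Fin n) k}
    (hf : f ∈ (vanishingIdeal k ({0} : Set (Fin n → k))) ^ m) :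
    ∀ u ∈ f.support, m ≤ u.sum fun _ e => e := by
  classical
  induction m generalizing f with
  | zero => intro u _; exact Nat.zero_le _
  | succ m ih =>
      rw [pow_succ] at hf
      refine Submodule.mul_induction_on hf ?_ ?_
      · intro p hp q hq u hu
        have hsub := support_mul p q hu
        obtain ⟨a, ha, b, hb, rfl⟩ := Finset.mem_add.mp hsub
        have hsum : ((a + b).sum fun _ e => e) = (a.sum fun _ e => e) + (b.sum fun _ e => e) :=
          Finsupp.sum_add_index' (fun _ => rfl) (fun _ _ _ => rfl)
        rw [hsum]
        have h1 := ih hp a ha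
        have h2 := one_le_wt_of_mem_m0 hq hb
        omega
      · intro x y hx hy u hu
        have := Finsupp.support_add hu
        rcases Finset.mem_union.mp this with h | h
        · exact hx u h
        · exact hy u h

lemma decompose (m : ℕ) (hm : 1 ≤ m) (p : MvPolynomial (Fin n) k) :
    ∃ q r : MvPolynomial (Fin n) k, p = q + r ∧ q.totalDegree ≤ m - 1 ∧
      r ∈ (vanishingIdeal k ({0} : Set (Fin n → k))) ^ m := by
  classical
  refine ⟨∑ u ∈ p.support.filter (fun u => (u.sum fun _ e => e) < m),
      monomial u (coeff u p),
    ∑ u ∈ p.support.filter (fun u => ¬ ((u.sum fun _ e => e) < m)),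
      monomial u (coeff u p), ?_, ?_, ?_⟩
  · conv_lhs => rw [p.as_sum]
    exact (Finset.sum_filter_add_sum_filter_not _ _ _).symm
  · apply totalDegree_finsetSum_le
    intro u hu
    rw [Finset.mem_filter] at hu
    refine (totalDegree_monomial_le _ _).trans ?_
    simp only [Function.id_def]
    omega
  · refine Submodule.sum_mem _ fun u hu => ?_
    rw [Finset.mem_filter] at hu
    exact monomial_mem_m0_pow _ (by omega)


lemma tau_mem_pow_my (y : Fin n → k) (m : ℕ) {f : MvPolynomial (Fin n) k}
    (hf : f ∈ (vanishingIdeal k ({0} : Set (Fin n → k))) ^ m) :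
    tau (-y) f ∈ (vanishingIdeal k ({y} : Set (Fin n → k))) ^ m := by
  have hle : vanishingIdeal k ({0} : Set (Fin n → k)) ≤
      Ideal.comap (tau (-y)).toRingHom (vanishingIdeal k ({y} : Set (Fin n → k))) := by
    intro h hh
    rw [Ideal.mem_comap]
    rw [mem_vanishingIdeal_singleton_iff] at hh ⊢
    show eval y (tau (-y) h) = 0
    rw [eval_tau]
    rw [add_neg_cancel]
    exact hh
  have h2 := (Ideal.pow_right_mono hle m).trans (Ideal.le_comap_pow _ m) hf
  exact Ideal.mem_comap.mp h2

lemma tau_mem_pow_m0 (y : Fin n → k) (m : ℕ) {f : MvPolynomial (Fin n) k}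
    (hf : f ∈ (vanishingIdeal k ({y} : Set (Fin n → k))) ^ m) :
    tau y f ∈ (vanishingIdeal k ({0} : Set (Fin n → k))) ^ m := by
  have hle : vanishingIdeal k ({y} : Set (Fin n → k)) ≤
      Ideal.comap (tau y).toRingHom (vanishingIdeal k ({0} : Set (Fin n → k))) := by
    intro h hh
    rw [Ideal.mem_comap]
    rw [mem_vanishingIdeal_singleton_iff] at hh ⊢
    show eval 0 (tau y h) = 0
    rw [eval_tau]
    rw [zero_add]
    exact hh
  have h2 := (Ideal.pow_right_mono hle m).trans (Ideal.le_comap_pow _ m) hf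
  exact Ideal.mem_comap.mp h2

lemma approx {m : ℕ} (hm : 1 ≤ m) (y : Fin n → k) (p : MvPolynomial (Fin n) k) :
    ∃ q : MvPolynomial (Fin n) k, q.totalDegree ≤ m - 1 ∧
      p - q ∈ (vanishingIdeal k ({y} : Set (Fin n → k))) ^ m := by
  obtain ⟨q', r', hpd, hdeg, hr⟩ := decompose m hm (tau y p)
  refine ⟨tau (-y) q', (totalDegree_tau_le _ _).trans hdeg, ?_⟩
  have harg : tau y p - q' = r' := by rw [hpd]; ring
  have hkey : p - tau (-y) q' = tau (-y) r' := by
    calc p - tau (-y) q' = tau (-y) (tau y p) - tau (-y) q' := by rw [tau_neg_tau]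
      _ = tau (-y) (tau y p - q') := (map_sub _ _ _).symm
      _ = tau (-y) r' := by rw [harg]
  rw [hkey]
  exact tau_mem_pow_my y m hr

lemma eq_zero_of_low_degree {m : ℕ} (hm : 1 ≤ m) (y : Fin n → k) {p : MvPolynomial (Fin n) k}
    (hdeg : p.totalDegree ≤ m - 1) (hp : p ∈ (vanishingIdeal k ({y} : Set (Fin n → k))) ^ m) :
    p = 0 := by
  have hg : tau y p ∈ (vanishingIdeal k ({0} : Set (Fin n → k))) ^ m := tau_mem_pow_m0 y m hp
  have hsupp : (tau y p).support = ∅ := by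
    by_contra hne
    obtain ⟨u, hu⟩ := Finset.nonempty_iff_ne_empty.mpr hne
    have h1 := wt_ge_of_mem_m0_pow hg u hu
    have h2 : (u.sum fun _ e => e) ≤ (tau y p).totalDegree := le_totalDegree hu
    have h3 : (tau y p).totalDegree ≤ m - 1 := (totalDegree_tau_le _ _).trans hdeg
    omega
  have hz : tau y p = 0 := support_eq_empty.mp hsupp
  calc p = tau (-y) (tau y p) := (tau_neg_tau y p).symm
    _ = 0 := by rw [hz]; exact map_zero _



lemma wt_eq_sum {N : ℕ} (u : Fin N →₀ ℕ) : (u.sum fun _ e => e) = ∑ i, u i :=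
  Finsupp.sum_fintype _ _ (fun _ => rfl)

/-- Stars and bars equiv : pad with an extra coordinate. -/
def consEquiv (n D : ℕ) :
    {u : Fin n →₀ ℕ // (u.sum fun _ e => e) ≤ D} ≃
      {w : Fin (n + 1) →₀ ℕ // (w.sum fun _ e => e) = D} where
  toFun u := ⟨Finsupp.cons (D - ∑ i, (u : Fin n →₀ ℕ) i) u, by
    rw [wt_eq_sum, Fin.sum_univ_succ]
    simp only [Finsupp.cons_zero, Finsupp.cons_succ]
    have h := u.2
    rw [wt_eq_sum] at h
    omega⟩
  invFun w := ⟨Finsupp.tail w, by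
    have h := w.2
    rw [wt_eq_sum] at h ⊢
    rw [Fin.sum_univ_succ] at h
    simp only [Finsupp.tail_apply]
    omega⟩
  left_inv u := by
    ext1
    exact Finsupp.tail_cons _ _
  right_inv w := by
    ext1
    dsimp only
    have h := w.2
    rw [wt_eq_sum, Fin.sum_univ_succ] at h
    have h0 : D - ∑ i, (Finsupp.tail (w : Fin (n+1) →₀ ℕ)) i = (w : Fin (n+1) →₀ ℕ) 0 := by
      simp only [Finsupp.tail_apply]
      omega
    rw [h0]
    exact Finsupp.cons_tail _

def symEquiv (N D : ℕ) :
    {w : Fin N →₀ ℕ // (w.sum fun _ e => e) = D} ≃ Sym (Fin N) D :=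
  Equiv.subtypeEquiv (Multiset.toFinsupp (α := Fin N)).symm.toEquiv (by
    intro w
    show (w.sum fun _ e => e) = D ↔ Multiset.card (Multiset.toFinsupp.symm w) = D
    have : Multiset.card (Multiset.toFinsupp.symm w) = w.sum fun _ e => e := by
      rw [show (Multiset.toFinsupp.symm w : Multiset (Fin N)) = Finsupp.toMultiset w from rfl]
      rw [Finsupp.card_toMultiset]
      rfl
    omega)

lemma finrank_restrictTotalDegree (D : ℕ) :
    Module.finrank k (restrictTotalDegree (Fin n) k D) = (D + n).choose n := by
  classical
  have b : Module.Basis {u : Fin n →₀ ℕ // (u.sum fun _ e => e) ≤ D} k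
      (restrictTotalDegree (Fin n) k D) := basisRestrictSupport k _
  let E : {u : Fin n →₀ ℕ // (u.sum fun _ e => e) ≤ D} ≃ Sym (Fin (n + 1)) D :=
    (consEquiv n D).trans (symEquiv (n + 1) D)
  haveI : Fintype {u : Fin n →₀ ℕ // (u.sum fun _ e => e) ≤ D} := Fintype.ofEquiv _ E.symm
  rw [Module.finrank_eq_card_basis b, Fintype.card_congr E, Sym.card_sym_eq_choose]
  rw [Fintype.card_fin]
  have h1 : n + 1 + D - 1 = n + D := by omega
  have h3 : (n + D).choose D = (n + D).choose n := by
    have h4 := Nat.choose_symm (show n ≤ n + D by omega)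
    rwa [Nat.add_sub_cancel_left] at h4
  rw [h1, h3, Nat.add_comm n D]


end Aux14

open Aux14 in
set_option maxHeartbeats 1000000 in
/-- for a finite set `Y` of size `s ≥ 1` and `d ≥ 2ms - m - s`,
`HF^m(Y, d) = C(m+n-1, n) · s`. -/
theorem statement14 (k : Type*) [Field k] (n m s : ℕ) (hm : 1 ≤ m) (hs : 1 ≤ s)
    (Y : Set (Fin n → k)) (hY : Y.Finite) (hcard : Y.ncard = s)
    (d : ℕ) (hd : 2 * m * s - m - s ≤ d) :
    HFm m Y d = (m + n - 1).choose n * s := by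
  classical
  haveI : Fintype Y := hY.fintype
  have hsY : Fintype.card Y = s := by
    rw [← hcard, Set.ncard_eq_toFinset_card', Set.toFinset_card]
  -- arithmetic
  have e1 : 2 * m * s = m * s + m * s := by ring
  have e2 : m * s = m * (s - 1) + m := by
    have h : s - 1 + 1 = s := by omega
    calc m * s = m * (s - 1 + 1) := by rw [h]
      _ = m * (s - 1) + m := by ring
  have e3 : 1 * (s - 1) ≤ m * (s - 1) := Nat.mul_le_mul_right _ hm
  have hd' : (m - 1) + m * (s - 1) ≤ d := by omega
  -- the ideals at points
  set M : Y → Ideal (MvPolynomial (Fin n) k) := fun y =>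
    (vanishingIdeal k ({(y : Fin n → k)} : Set (Fin n → k))) ^ m with hM
  let Φ : MvPolynomial (Fin n) k →ₗ[k] ∀ y : Y, MvPolynomial (Fin n) k ⧸ M y :=
    LinearMap.pi fun y => (Ideal.Quotient.mkₐ k (M y)).toLinearMap
  have hΦapp : ∀ (f : MvPolynomial (Fin n) k) (y : Y),
      Φ f y = Ideal.Quotient.mk (M y) f := fun f y => rfl
  have hcomp : ∀ f : MvPolynomial (Fin n) k, (Φ f = 0 ↔ ∀ y : Y, f ∈ M y) := by
    intro f
    constructor
    · intro h y
      have h1 : Φ f y = 0 := by rw [h]; rfl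
      rw [hΦapp] at h1
      exact (Ideal.Quotient.eq_zero_iff_mem).mp h1
    · intro h
      funext y
      rw [hΦapp]
      exact (Ideal.Quotient.eq_zero_iff_mem).mpr (h y)
  have hkerΦ : LinearMap.ker Φ = Submodule.restrictScalars k (orderIdeal m Y) := by
    ext f
    rw [LinearMap.mem_ker, hcomp f, Submodule.restrictScalars_mem, orderIdeal]
    simp only [Submodule.mem_iInf]
    constructor
    · intro h x hx; exact h ⟨x, hx⟩
    · intro h y; exact h y y.2
  -- surjectivity onto each "single" target
  have hsingle : ∀ (y : Y) (t : MvPolynomial (Fin n) k ⧸ M y),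
      ∃ g : MvPolynomial (Fin n) k, g.totalDegree ≤ d ∧ Φ g = Pi.single y t := by
    intro y t
    obtain ⟨f, rfl⟩ := Ideal.Quotient.mk_surjective t
    set F := hY.toFinset with hF
    have hyF : (y : Fin n → k) ∈ F := by rw [hF, Set.Finite.mem_toFinset]; exact y.2
    have hcardF : F.card = s := by
      rw [hF, ← Set.ncard_eq_toFinset_card Y hY]; exact hcard
    have hcarde : (F.erase (y : Fin n → k)).card = s - 1 := by
      rw [Finset.card_erase_of_mem hyF, hcardF]
    let ℓ : (Fin n → k) → MvPolynomial (Fin n) k := fun z =>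
      if h : ∃ i, z i ≠ (y : Fin n → k) i then X h.choose - C (z h.choose) else 1
    have hldeg : ∀ z, (ℓ z).totalDegree ≤ 1 := by
      intro z
      by_cases h : ∃ i, z i ≠ (y : Fin n → k) i
      · simp only [ℓ, dif_pos h]
        rw [sub_eq_add_neg, ← C_neg]
        refine (totalDegree_add _ _).trans ?_
        simp [totalDegree_X, totalDegree_C]
      · simp only [ℓ, dif_neg h, totalDegree_one]
        exact Nat.zero_le _
    have hlz : ∀ z, z ≠ (y : Fin n → k) → eval z (ℓ z) = 0 := by
      intro z hz
      have h : ∃ i, z i ≠ (y : Fin n → k) i := by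
        by_contra hc; push_neg at hc; exact hz (funext hc)
      simp only [ℓ, dif_pos h]
      simp
    have hly : ∀ z, z ≠ (y : Fin n → k) → eval (y : Fin n → k) (ℓ z) ≠ 0 := by
      intro z hz
      have h : ∃ i, z i ≠ (y : Fin n → k) i := by
        by_contra hc; push_neg at hc; exact hz (funext hc)
      simp only [ℓ, dif_pos h]
      have hc := h.choose_spec
      simp only [map_sub, eval_X, eval_C]
      exact sub_ne_zero.mpr (Ne.symm hc)
    set Q : MvPolynomial (Fin n) k := ∏ z ∈ F.erase (y : Fin n → k), ℓ z with hQ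
    have hQdeg : Q.totalDegree ≤ s - 1 := by
      refine (totalDegree_finset_prod _ _).trans ?_
      calc ∑ z ∈ F.erase (y : Fin n → k), (ℓ z).totalDegree
          ≤ ∑ _z ∈ F.erase (y : Fin n → k), 1 := Finset.sum_le_sum (fun z _ => hldeg z)
        _ = s - 1 := by rw [Finset.sum_const, hcarde, smul_eq_mul, mul_one]
    have hQz : ∀ z : Y, z ≠ y → Q ^ m ∈ M z := by
      intro z hzy
      have hne : (z : Fin n → k) ≠ (y : Fin n → k) := fun hc => hzy (Subtype.ext hc)
      have hz : (z : Fin n → k) ∈ F.erase (y : Fin n → k) :=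
        Finset.mem_erase.mpr ⟨hne, by rw [hF, Set.Finite.mem_toFinset]; exact z.2⟩
      have hQz0 : eval (z : Fin n → k) Q = 0 := by
        rw [hQ, map_prod]
        exact Finset.prod_eq_zero hz (hlz _ hne)
      have hQmem : Q ∈ vanishingIdeal k ({(z : Fin n → k)} : Set (Fin n → k)) :=
        (mem_vanishingIdeal_singleton_iff _ _).mpr hQz0
      exact Ideal.pow_mem_pow hQmem m
    have hQy : eval (y : Fin n → k) Q ≠ 0 := by
      rw [hQ, map_prod, Finset.prod_ne_zero_iff]
      intro z hz
      exact hly z (Finset.mem_erase.mp hz).1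
    have hQnot : Q ∉ vanishingIdeal k ({(y : Fin n → k)} : Set (Fin n → k)) := by
      rw [mem_vanishingIdeal_singleton_iff]; exact hQy
    have hcop : IsCoprime (Ideal.span {Q})
        (vanishingIdeal k ({(y : Fin n → k)} : Set (Fin n → k))) := by
      rw [Ideal.isCoprime_iff_sup_eq]
      obtain ⟨w0, i0, hi0, hw0⟩ := Ideal.IsMaximal.exists_inv inferInstance hQnot
      rw [Ideal.eq_top_iff_one]
      have h1 : w0 * Q ∈ Ideal.span {Q} := Ideal.mem_span_singleton.mpr (dvd_mul_left Q w0)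
      have h2 := Submodule.add_mem_sup h1 hi0
      rwa [hw0] at h2
    have hcop2 : IsCoprime (Ideal.span {Q})
        ((vanishingIdeal k ({(y : Fin n → k)} : Set (Fin n → k))) ^ m) := hcop.pow_right
    have h1mem : (1 : MvPolynomial (Fin n) k) ∈ Ideal.span {Q} ⊔
        (vanishingIdeal k ({(y : Fin n → k)} : Set (Fin n → k))) ^ m := by
      rw [hcop2.sup_eq]; exact Submodule.mem_top
    obtain ⟨u, hu, v, hv, huv⟩ := Submodule.mem_sup.mp h1mem
    obtain ⟨w, rfl⟩ := Ideal.mem_span_singleton'.mp hu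
    have hB : 1 - w * Q ∈ (vanishingIdeal k ({(y : Fin n → k)} : Set (Fin n → k))) ^ m := by
      have h3 : 1 - w * Q = v := by rw [← huv]; ring
      rw [h3]; exact hv
    have hBm : 1 - (w * Q) ^ m ∈
        (vanishingIdeal k ({(y : Fin n → k)} : Set (Fin n → k))) ^ m := by
      obtain ⟨c, hc⟩ := sub_dvd_pow_sub_pow 1 (w * Q) m
      rw [one_pow] at hc
      rw [hc]
      exact Ideal.mul_mem_right _ _ hB
    obtain ⟨h, hhdeg, hhmem⟩ := approx hm (y : Fin n → k) (f * w ^ m)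
    refine ⟨h * Q ^ m, ?_, ?_⟩
    · refine (totalDegree_mul _ _).trans ?_
      have hq : (Q ^ m).totalDegree ≤ m * (s - 1) :=
        (totalDegree_pow _ _).trans (Nat.mul_le_mul_left _ hQdeg)
      calc h.totalDegree + (Q ^ m).totalDegree
          ≤ (m - 1) + m * (s - 1) := add_le_add hhdeg hq
        _ ≤ d := hd'
    · funext z
      rw [hΦapp]
      by_cases hzy : z = y
      · subst hzy
        rw [Pi.single_eq_same]
        rw [Ideal.Quotient.eq]
        have hid : h * Q ^ m - f =
            (h - f * w ^ m) * Q ^ m + f * -(1 - (w * Q) ^ m) := by ring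
        rw [hM]
        rw [hid]
        refine Submodule.add_mem _ ?_ ?_
        · refine Ideal.mul_mem_right _ _ ?_
          have h4 : h - f * w ^ m = -(f * w ^ m - h) := by ring
          rw [h4]; exact neg_mem hhmem
        · exact Ideal.mul_mem_left _ _ (neg_mem hBm)
      · rw [Pi.single_eq_of_ne hzy]
        rw [Ideal.Quotient.eq_zero_iff_mem]
        exact Ideal.mul_mem_left _ _ (hQz z hzy)
  -- the truncated map
  set φ : (restrictTotalDegree (Fin n) k d) →ₗ[k] ∀ y : Y, MvPolynomial (Fin n) k ⧸ M y :=
    Φ ∘ₗ (restrictTotalDegree (Fin n) k d).subtype with hφ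
  have hkerφ : LinearMap.ker φ = Submodule.comap (restrictTotalDegree (Fin n) k d).subtype
      (Submodule.restrictScalars k (orderIdeal m Y)) := by
    rw [hφ, LinearMap.ker_comp, hkerΦ]
  have hsurj : Function.Surjective φ := by
    intro x
    choose g hgdeg hgval using fun y => hsingle y (x y)
    refine ⟨⟨∑ y : Y, g y,
      Submodule.sum_mem _ fun y _ => (mem_restrictTotalDegree _ _ _).mpr (hgdeg y)⟩, ?_⟩
    show Φ (∑ y : Y, g y) = x
    rw [map_sum]
    calc ∑ y : Y, Φ (g y) = ∑ y : Y, Pi.single y (x y) :=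
          Finset.sum_congr rfl (fun y _ => hgval y)
      _ = x := Finset.univ_sum_single x
  -- pointwise linear equivalences
  have hpoint : ∀ y : Y, Nonempty
      ((restrictTotalDegree (Fin n) k (m - 1)) ≃ₗ[k] (MvPolynomial (Fin n) k ⧸ M y)) := by
    intro y
    let ψ : (restrictTotalDegree (Fin n) k (m - 1)) →ₗ[k] (MvPolynomial (Fin n) k ⧸ M y) :=
      (Ideal.Quotient.mkₐ k (M y)).toLinearMap ∘ₗ (restrictTotalDegree (Fin n) k (m - 1)).subtype
    have hψapp : ∀ p : (restrictTotalDegree (Fin n) k (m - 1)),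
        ψ p = Ideal.Quotient.mk (M y) (p : MvPolynomial (Fin n) k) := fun p => rfl
    have hinj : Function.Injective ψ := by
      rw [← LinearMap.ker_eq_bot, eq_bot_iff]
      rintro ⟨p, hp⟩ hker
      have h1 : Ideal.Quotient.mk (M y) p = 0 := by
        rw [← hψapp ⟨p, hp⟩]; exact hker
      have h2 : p ∈ M y := (Ideal.Quotient.eq_zero_iff_mem).mp h1
      rw [hM] at h2
      have h3 : p = 0 := eq_zero_of_low_degree hm _ ((mem_restrictTotalDegree _ _ _).mp hp) h2
      exact (Submodule.mem_bot _).mpr (Subtype.ext h3)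
    have hsur : Function.Surjective ψ := by
      intro t
      obtain ⟨f, rfl⟩ := Ideal.Quotient.mk_surjective t
      obtain ⟨q, hqdeg, hqmem⟩ := approx hm (y : Fin n → k) f
      refine ⟨⟨q, (mem_restrictTotalDegree _ _ _).mpr hqdeg⟩, ?_⟩
      rw [hψapp]
      rw [Ideal.Quotient.eq, hM]
      have h4 : q - f = -(f - q) := by ring
      rw [h4]
      exact neg_mem hqmem
    exact ⟨LinearEquiv.ofBijective ψ ⟨hinj, hsur⟩⟩
  haveI hfinq : ∀ y : Y, Module.Finite k (MvPolynomial (Fin n) k ⧸ M y) := by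
    intro y
    exact Module.Finite.equiv (hpoint y).some
  have hC : ∀ y : Y, Module.finrank k (MvPolynomial (Fin n) k ⧸ M y)
      = ((m - 1) + n).choose n := by
    intro y
    rw [← (hpoint y).some.finrank_eq]
    exact finrank_restrictTotalDegree (m - 1)
  -- put everything together
  have step1 : HFm m Y d = Module.finrank k
      ((restrictTotalDegree (Fin n) k d) ⧸ LinearMap.ker φ) := by
    rw [HFm, affineHF]
    exact (Submodule.quotEquivOfEq _ _ hkerφ.symm).finrank_eq
  rw [step1, (φ.quotKerEquivOfSurjective hsurj).finrank_eq,
    Module.finrank_pi_fintype k]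
  rw [Finset.sum_congr rfl (fun y _ => hC y), Finset.sum_const, Finset.card_univ, hsY,
    smul_eq_mul]
  have hfinal : (m + n - 1).choose n = ((m - 1) + n).choose n := by
    congr 1
    omega
  rw [hfinal, mul_comm]

end
end

section
/- Let q be a prime power, n ≥ 1, m ≥ 1, and let Y be a subset of F_q^n. Then for every integer d ≥ n(q−1) + (m−1)q, HF^m(Y, d) = C(m+n−1, n) · |Y|, where C(m+n−1, n) is the binomial coefficient. -/
open MvPolynomial

noncomputable section

namespace S15
open Finset

variable {K : Type*} [Field K] {n : ℕ}

/-- degree of an exponent vector -/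
def deg (γ : Fin n →₀ ℕ) : ℕ := ∑ j, γ j

lemma deg_eq_sum (γ : Fin n →₀ ℕ) : γ.sum (fun _ e => e) = deg γ :=
  Finsupp.sum_fintype _ _ (fun _ => rfl)

lemma deg_add (a b : Fin n →₀ ℕ) : deg (a + b) = deg a + deg b := by
  simp [deg, Finset.sum_add_distrib]

lemma deg_eq_zero {γ : Fin n →₀ ℕ} (h : deg γ = 0) : γ = 0 := by
  ext j
  have := Finset.sum_eq_zero_iff.mp h j (Finset.mem_univ j)
  simpa using this

abbrev mIdeal (p : Fin n → K) : Ideal (MvPolynomial (Fin n) K) :=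
  vanishingIdeal K ({p} : Set (Fin n → K))

lemma mem_mIdeal {p : Fin n → K} {P : MvPolynomial (Fin n) K} :
    P ∈ mIdeal p ↔ eval p P = 0 := by rw [mem_vanishingIdeal_singleton_iff]; rfl

lemma coeff_zero_of_mem_mIdeal0 {P : MvPolynomial (Fin n) K}
    (h : P ∈ mIdeal (0 : Fin n → K)) : coeff 0 P = 0 := by
  rw [mem_mIdeal, eval_zero, constantCoeff_eq] at h
  exact h

lemma coeff_eq_zero_of_mem_pow (j : ℕ) :
    ∀ P : MvPolynomial (Fin n) K, P ∈ (mIdeal (0 : Fin n → K)) ^ j →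
    ∀ α : Fin n →₀ ℕ, deg α < j → coeff α P = 0 := by
  induction j with
  | zero => intro P _ α hα; omega
  | succ j ih =>
    intro P hP
    rw [pow_succ] at hP
    refine Submodule.mul_induction_on hP ?_ ?_
    · intro r hr s hs α hα
      rw [coeff_mul]
      refine Finset.sum_eq_zero fun x hx => ?_
      rcases lt_or_ge (deg x.1) j with h1 | h1
      · rw [ih r hr x.1 h1, zero_mul]
      · have hxa : x.1 + x.2 = α := Finset.HasAntidiagonal.mem_antidiagonal.mp hx
        have : deg x.2 = 0 := by
          have := deg_add x.1 x.2
          rw [hxa] at this; omega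
        rw [deg_eq_zero this, coeff_zero_of_mem_mIdeal0 hs, mul_zero]
    · intro x y hx hy α hα
      rw [coeff_add, hx α hα, hy α hα, add_zero]

lemma X_mem_mIdeal0 (i : Fin n) : (X i : MvPolynomial (Fin n) K) ∈ mIdeal (0 : Fin n → K) := by
  rw [mem_mIdeal]; simp

lemma monomial_mem_pow (α : Fin n →₀ ℕ) (c : K) :
    monomial α c ∈ (mIdeal (0 : Fin n → K)) ^ (deg α) := by
  induction α using Finsupp.induction with
  | zero => simp [deg]
  | single_add i k β hi hk ihβ =>
    have h1 : (monomial (Finsupp.single i k + β) c : MvPolynomial (Fin n) K)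
        = X i ^ k * monomial β c := by
      rw [X_pow_eq_monomial, monomial_mul, one_mul]
    rw [h1, deg_add]
    have hs : deg (Finsupp.single i k : Fin n →₀ ℕ) = k := by
      simp [deg, Finsupp.single_apply]
    rw [hs]
    rw [pow_add]
    exact Ideal.mul_mem_mul (Ideal.pow_mem_pow (X_mem_mIdeal0 i) k) ihβ

lemma monomial_mem_pow' {m : ℕ} {α : Fin n →₀ ℕ} (h : m ≤ deg α) (c : K) :
    monomial α c ∈ (mIdeal (0 : Fin n → K)) ^ m :=
  Ideal.pow_le_pow_right h (monomial_mem_pow α c)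


-- low part
def lowSet (n m : ℕ) : Set (Fin n →₀ ℕ) := {α | deg α < m}

lemma monomial_mem_restrictSupport {s : Set (Fin n →₀ ℕ)} {α : Fin n →₀ ℕ} (hα : α ∈ s) (c : K) :
    monomial α c ∈ restrictSupport K s := by
  rw [restrictSupport, AddMonoidAlgebra.mem_supported]
  exact fun β hβ => by
    have := support_monomial_subset (s := α) (a := c) hβ
    simp only [Finset.mem_singleton] at this
    simpa [this] using hα

lemma exists_split (m : ℕ) (P : MvPolynomial (Fin n) K) :
    ∃ Q R, P = Q + R ∧ Q ∈ restrictSupport K (lowSet n m) ∧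
      R ∈ (mIdeal (0 : Fin n → K)) ^ m := by
  classical
  refine ⟨∑ α ∈ P.support.filter (fun α => deg α < m), monomial α (coeff α P),
    ∑ α ∈ P.support.filter (fun α => ¬ deg α < m), monomial α (coeff α P), ?_, ?_, ?_⟩
  · rw [Finset.sum_filter_add_sum_filter_not, support_sum_monomial_coeff]
  · exact Submodule.sum_mem _ fun α hα =>
      monomial_mem_restrictSupport (Finset.mem_filter.mp hα).2 _
  · exact Submodule.sum_mem _ fun α hα =>
      monomial_mem_pow' (by have := (Finset.mem_filter.mp hα).2; omega) _

def lowToQuot (m : ℕ) : restrictSupport K (lowSet n m) →ₗ[K]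
    (MvPolynomial (Fin n) K ⧸ (mIdeal (0 : Fin n → K)) ^ m) :=
  (Ideal.Quotient.mkₐ K _).toLinearMap.comp (Submodule.subtype _)

lemma lowToQuot_bijective (m : ℕ) : Function.Bijective (lowToQuot (K := K) (n := n) m) := by
  constructor
  · intro x y hxy
    have h : (x : MvPolynomial (Fin n) K) - y ∈ (mIdeal (0 : Fin n → K)) ^ m := by
      rw [← Ideal.Quotient.eq]
      exact hxy
    ext1
    rw [← sub_eq_zero]
    apply MvPolynomial.ext
    intro α
    rcases lt_or_ge (deg α) m with hα | hα
    · simpa using coeff_eq_zero_of_mem_pow m _ h α hα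
    · have hx : α ∉ (x : MvPolynomial (Fin n) K).support := fun hmem =>
        absurd (x.2 hmem) (by simp [lowSet]; omega)
      have hy : α ∉ (y : MvPolynomial (Fin n) K).support := fun hmem =>
        absurd (y.2 hmem) (by simp [lowSet]; omega)
      simp [coeff_sub, notMem_support_iff.mp hx, notMem_support_iff.mp hy]
  · intro z
    obtain ⟨P, rfl⟩ := Ideal.Quotient.mk_surjective z
    obtain ⟨Q, R, rfl, hQ, hR⟩ := exists_split m P
    refine ⟨⟨Q, hQ⟩, ?_⟩
    show Ideal.Quotient.mkₐ K _ Q = _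
    rw [Ideal.Quotient.mkₐ_eq_mk, Ideal.Quotient.eq]
    simpa using (Submodule.neg_mem _ hR)

-- counting
def multisetEquiv (m : ℕ) : {s : Multiset (Fin n) // Multiset.card s < m} ≃
    Σ j : Fin m, Sym (Fin n) j where
  toFun s := ⟨⟨Multiset.card s.1, s.2⟩, ⟨s.1, rfl⟩⟩
  invFun b := ⟨b.2.1, by rw [b.2.2]; exact b.1.2⟩
  left_inv s := rfl
  right_inv := by
    rintro ⟨⟨j, hj⟩, s⟩
    obtain ⟨s, hs⟩ := s
    dsimp at hs
    subst hs
    rfl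

def lowEquiv (m : ℕ) : (lowSet n m) ≃ Σ j : Fin m, Sym (Fin n) (j : ℕ) :=
  (((Multiset.toFinsupp (α := Fin n)).toEquiv.subtypeEquiv (fun s => by
    show Multiset.card s < m ↔ _
    have h : deg (Multiset.toFinsupp s) = Multiset.card s := by
      rw [← deg_eq_sum]
      exact Multiset.toFinsupp_sum_eq s
    simp only [lowSet, Set.mem_setOf_eq]
    rw [show ((Multiset.toFinsupp (α := Fin n)).toEquiv s) = Multiset.toFinsupp s from rfl, h]
    )).symm).trans (multisetEquiv m)

instance lowFintype (m : ℕ) : Fintype (lowSet n m) := Fintype.ofEquiv _ (lowEquiv m).symm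

lemma card_lowSet (hn : 1 ≤ n) {m : ℕ} (hm : 1 ≤ m) :
    Fintype.card (lowSet n m) = (m + n - 1).choose n := by
  rw [Fintype.card_congr (lowEquiv (n := n) m), Fintype.card_sigma]
  have h1 : ∀ j : Fin m, Fintype.card (Sym (Fin n) (j : ℕ)) = Nat.multichoose n j := by
    intro j
    rw [Sym.card_sym_eq_multichoose, Fintype.card_fin]
  rw [Finset.sum_congr rfl (fun j _ => h1 j), Fin.sum_univ_eq_sum_range]
  obtain ⟨k, rfl⟩ := Nat.exists_eq_add_of_le hn
  obtain ⟨m', rfl⟩ := Nat.exists_eq_add_of_le hm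
  calc ∑ j ∈ Finset.range (1 + m'), Nat.multichoose (1 + k) j
      = ∑ j ∈ Finset.range (m' + 1), (j + k).choose k := by
        rw [show 1 + m' = m' + 1 by omega]
        refine Finset.sum_congr rfl fun j hj => ?_
        rw [Nat.multichoose_eq, show 1 + k + j - 1 = j + k by omega,
          ← Nat.choose_symm (Nat.le_add_right j k), Nat.add_sub_cancel_left]
    _ = (m' + k + 1).choose (k + 1) := by
        simpa using Nat.sum_range_add_choose m' k
    _ = (1 + m' + (1 + k) - 1).choose (1 + k) := by congr 1 <;> omega


/-- translation by `p` -/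
def trans (p : Fin n → K) : MvPolynomial (Fin n) K ≃ₐ[K] MvPolynomial (Fin n) K :=
  AlgEquiv.ofAlgHom (aeval fun i => X i + C (p i)) (aeval fun i => X i - C (p i))
    (by ext i : 1 <;> simp [MvPolynomial.algebraMap_eq])
    (by ext i : 1 <;> simp [MvPolynomial.algebraMap_eq])

lemma eval_zero_trans (p : Fin n → K) (P : MvPolynomial (Fin n) K) :
    eval (0 : Fin n → K) (trans p P) = eval p P := by
  have h : (eval (0 : Fin n → K)).comp ((trans p : MvPolynomial (Fin n) K →ₐ[K]
      MvPolynomial (Fin n) K) : MvPolynomial (Fin n) K →+* MvPolynomial (Fin n) K) = eval p := by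
    apply MvPolynomial.ringHom_ext
    · intro c; simp [trans, MvPolynomial.algebraMap_eq]
    · intro i; simp [trans]
  exact RingHom.congr_fun h P

lemma comap_trans (p : Fin n → K) :
    Ideal.comap (trans p : MvPolynomial (Fin n) K →+* MvPolynomial (Fin n) K)
      (mIdeal (0 : Fin n → K)) = mIdeal p := by
  ext P
  rw [Ideal.mem_comap, mem_mIdeal, mem_mIdeal]
  rw [show ((trans p : MvPolynomial (Fin n) K →+* MvPolynomial (Fin n) K) P) = trans p P from rfl,
    eval_zero_trans]

lemma map_trans_pow (p : Fin n → K) (m : ℕ) :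
    Ideal.map ((trans p : MvPolynomial (Fin n) K ≃ₐ[K] MvPolynomial (Fin n) K) :
      MvPolynomial (Fin n) K →+* MvPolynomial (Fin n) K) ((mIdeal p) ^ m)
      = (mIdeal (0 : Fin n → K)) ^ m := by
  rw [Ideal.map_pow]
  congr 1
  rw [← comap_trans p]
  exact Ideal.map_comap_of_surjective (trans p : MvPolynomial (Fin n) K →+* MvPolynomial (Fin n) K) (trans p).surjective _

/-- quotient by `mIdeal p ^ m` is isomorphic to quotient at zero -/
def quotTransEquiv (p : Fin n → K) (m : ℕ) :
    (MvPolynomial (Fin n) K ⧸ (mIdeal p) ^ m) ≃ₐ[K]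
      (MvPolynomial (Fin n) K ⧸ (mIdeal (0 : Fin n → K)) ^ m) :=
  Ideal.quotientEquivAlg ((mIdeal p) ^ m) ((mIdeal (0 : Fin n → K)) ^ m)
    (trans p) (map_trans_pow p m).symm



lemma finrank_quot [Fintype K] (p : Fin n → K) (m : ℕ) (hn : 1 ≤ n) (hm : 1 ≤ m) :
    Module.finrank K (MvPolynomial (Fin n) K ⧸ (mIdeal p) ^ m) = (m + n - 1).choose n := by
  rw [(quotTransEquiv p m).toLinearEquiv.finrank_eq,
    ← (LinearEquiv.ofBijective (lowToQuot (K := K) (n := n) m) (lowToQuot_bijective m)).finrank_eq,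
    Module.finrank_eq_card_basis (basisRestrictSupport K (lowSet n m)),
    card_lowSet hn hm]

lemma finite_quot (p : Fin n → K) (m : ℕ) :
    Module.Finite K (MvPolynomial (Fin n) K ⧸ (mIdeal p) ^ m) := by
  haveI : Module.Finite K (restrictSupport K (lowSet n m)) :=
    Module.Finite.of_basis (basisRestrictSupport K _)
  haveI := Module.Finite.equiv
    (LinearEquiv.ofBijective (lowToQuot (K := K) (n := n) m) (lowToQuot_bijective m))
  exact Module.Finite.equiv (quotTransEquiv p m).symm.toLinearEquiv


/-- the spanning set of products of grid polynomials and low monomials -/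
def W (q n : ℕ) (K : Type*) [Field K] : Set (MvPolynomial (Fin n) K) :=
  {w | ∃ (e : Fin n → ℕ) (γ : Fin n →₀ ℕ), (∀ i, γ i < q) ∧
    w = (∏ i, ((X i : MvPolynomial (Fin n) K) ^ q - X i) ^ e i) * monomial γ 1}

lemma mul_grid_mem_spanW {q : ℕ} (i : Fin n) {P : MvPolynomial (Fin n) K}
    (hP : P ∈ Submodule.span K (W q n K)) :
    ((X i : MvPolynomial (Fin n) K) ^ q - X i) * P ∈ Submodule.span K (W q n K) := by
  induction hP using Submodule.span_induction with
  | mem w hw =>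
    obtain ⟨e, γ, hγ, rfl⟩ := hw
    apply Submodule.subset_span
    refine ⟨fun j => e j + (if j = i then 1 else 0), γ, hγ, ?_⟩
    rw [← mul_assoc]
    congr 1
    rw [Finset.prod_congr rfl (fun j _ => pow_add _ (e j) _), Finset.prod_mul_distrib]
    rw [mul_comm]
    congr 1
    symm
    calc (∏ j, ((X j : MvPolynomial (Fin n) K) ^ q - X j) ^ (if j = i then 1 else 0))
        = ∏ j, (if j = i then ((X j : MvPolynomial (Fin n) K) ^ q - X j) else 1) := by
          refine Finset.prod_congr rfl fun j _ => ?_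
          split <;> simp
      _ = (X i : MvPolynomial (Fin n) K) ^ q - X i := by
          rw [Finset.prod_ite_eq' Finset.univ i
            (fun j => ((X j : MvPolynomial (Fin n) K) ^ q - X j))]
          simp
  | zero => simp
  | add x y _ _ hx hy => rw [mul_add]; exact Submodule.add_mem _ hx hy
  | smul c x _ hx => rw [mul_smul_comm]; exact Submodule.smul_mem _ c hx

lemma key_identity {q : ℕ} (γ : Fin n →₀ ℕ) (i : Fin n) (h : q ≤ γ i) :
    (monomial γ (1 : K)) =
      ((X i : MvPolynomial (Fin n) K) ^ q - X i) * monomial (γ - Finsupp.single i q) 1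
        + monomial (γ - Finsupp.single i q + Finsupp.single i 1) 1 := by
  have e1 : (X i : MvPolynomial (Fin n) K) ^ q * monomial (γ - Finsupp.single i q) 1
      = monomial γ 1 := by
    have hγ : Finsupp.single i q + (γ - Finsupp.single i q) = γ := by
      ext j
      rw [Finsupp.add_apply, Finsupp.tsub_apply, Finsupp.single_apply]
      split_ifs with hij
      · subst hij; omega
      · omega
    rw [X_pow_eq_monomial, monomial_mul, one_mul, hγ]
  have e2 : (X i : MvPolynomial (Fin n) K) * monomial (γ - Finsupp.single i q) 1
      = monomial (γ - Finsupp.single i q + Finsupp.single i 1) 1 := by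
    rw [show (X i : MvPolynomial (Fin n) K) = X i ^ 1 by rw [pow_one],
      X_pow_eq_monomial, monomial_mul, one_mul, add_comm]
  rw [sub_mul, e1, e2, sub_add_cancel]

lemma deg_split (δ : Fin n →₀ ℕ) (i : Fin n) :
    deg δ = δ i + ∑ j ∈ Finset.univ.erase i, δ j :=
  (Finset.add_sum_erase Finset.univ δ (Finset.mem_univ i)).symm

lemma deg_sub_single {q : ℕ} (γ : Fin n →₀ ℕ) (i : Fin n) (h : q ≤ γ i) :
    deg (γ - Finsupp.single i q) = deg γ - q := by
  rw [deg_split (γ - Finsupp.single i q) i, deg_split γ i]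
  have h1 : ∀ j ∈ Finset.univ.erase i, (γ - Finsupp.single i q) j = γ j := by
    intro j hj
    have hij : j ≠ i := (Finset.mem_erase.mp hj).1
    simp [Finsupp.tsub_apply, Finsupp.single_apply, Ne.symm hij]
  rw [show (∑ j ∈ Finset.univ.erase i, (γ - Finsupp.single i q) j)
      = ∑ j ∈ Finset.univ.erase i, γ j from Finset.sum_congr rfl h1]
  have h2 : (γ - Finsupp.single i q) i = γ i - q := by
    simp [Finsupp.tsub_apply, Finsupp.single_apply]
  rw [h2]
  omega

lemma deg_add_single (γ : Fin n →₀ ℕ) (i : Fin n) :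
    deg (γ + Finsupp.single i 1) = deg γ + 1 := by
  rw [deg_split (γ + Finsupp.single i 1) i, deg_split γ i]
  have h1 : ∀ j ∈ Finset.univ.erase i, ((γ + Finsupp.single i 1 : Fin n →₀ ℕ)) j = γ j := by
    intro j hj
    have hij : j ≠ i := (Finset.mem_erase.mp hj).1
    simp [Finsupp.add_apply, Finsupp.single_apply, Ne.symm hij]
  rw [show (∑ j ∈ Finset.univ.erase i, (γ + Finsupp.single i 1 : Fin n →₀ ℕ) j)
      = ∑ j ∈ Finset.univ.erase i, γ j from Finset.sum_congr rfl h1]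
  have h2 : ((γ + Finsupp.single i 1 : Fin n →₀ ℕ)) i = γ i + 1 := by
    simp [Finsupp.add_apply, Finsupp.single_apply]
  rw [h2]
  omega

lemma monomial_mem_spanW {q : ℕ} (hq : 2 ≤ q) (N : ℕ) :
    ∀ γ : Fin n →₀ ℕ, deg γ ≤ N → monomial γ (1 : K) ∈ Submodule.span K (W q n K) := by
  induction N with
  | zero =>
    intro γ hγ
    apply Submodule.subset_span
    exact ⟨0, γ, fun i => by
      have : γ i ≤ deg γ := Finset.single_le_sum (fun _ _ => Nat.zero_le _) (Finset.mem_univ i)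
      omega, by simp⟩
  | succ N ih =>
    intro γ hγ
    by_cases hb : ∀ i, γ i < q
    · exact Submodule.subset_span ⟨0, γ, hb, by simp⟩
    · push_neg at hb
      obtain ⟨i, hi⟩ := hb
      rw [key_identity γ i hi]
      have hd1 : deg (γ - Finsupp.single i q) ≤ N := by
        rw [deg_sub_single γ i hi]
        have : q ≤ deg γ := le_trans hi
          (Finset.single_le_sum (fun _ _ => Nat.zero_le _) (Finset.mem_univ i))
        omega
      have hd2 : deg (γ - Finsupp.single i q + Finsupp.single i 1) ≤ N := by
        rw [show (γ - Finsupp.single i q + Finsupp.single i 1)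
            = (γ - Finsupp.single i q) + Finsupp.single i 1 from rfl, deg_add_single]
        have : q ≤ deg γ := le_trans hi
          (Finset.single_le_sum (fun _ _ => Nat.zero_le _) (Finset.mem_univ i))
        rw [deg_sub_single γ i hi]
        omega
      exact Submodule.add_mem _ (mul_grid_mem_spanW i (ih _ hd1)) (ih _ hd2)

lemma mem_spanW {q : ℕ} (hq : 2 ≤ q) (P : MvPolynomial (Fin n) K) :
    P ∈ Submodule.span K (W q n K) := by
  rw [← support_sum_monomial_coeff P]
  refine Submodule.sum_mem _ fun α _ => ?_
  rw [show (monomial α (coeff α P) : MvPolynomial (Fin n) K)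
      = (coeff α P) • monomial α 1 by rw [smul_monomial, smul_eq_mul, mul_one]]
  exact Submodule.smul_mem _ _ (monomial_mem_spanW hq (deg α) α le_rfl)


section Grid
variable [Fintype K]

lemma grid_mem_mIdeal (hq : Fintype.card K = q) (i : Fin n) (p : Fin n → K) :
    ((X i : MvPolynomial (Fin n) K) ^ q - X i) ∈ mIdeal p := by
  rw [mem_mIdeal, map_sub, map_pow, eval_X, ← hq, FiniteField.pow_card, sub_self]

lemma prod_grid_mem (hq : Fintype.card K = q) (e : Fin n → ℕ) (p : Fin n → K) :
    (∏ i, ((X i : MvPolynomial (Fin n) K) ^ q - X i) ^ e i) ∈ (mIdeal p) ^ (∑ i, e i) := by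
  classical
  induction (Finset.univ : Finset (Fin n)) using Finset.induction_on with
  | empty => simp [Ideal.one_eq_top]
  | insert a s hx ih =>
    rw [Finset.prod_insert hx, Finset.sum_insert hx, pow_add]
    exact Ideal.mul_mem_mul (Ideal.pow_mem_pow (grid_mem_mIdeal hq a p) _) ih

lemma totalDegree_W_le {q m d : ℕ} (hqpos : 1 ≤ q) (e : Fin n → ℕ) (γ : Fin n →₀ ℕ)
    (hγ : ∀ i, γ i < q) (he : ∑ i, e i ≤ m - 1) (hd : n * (q - 1) + (m - 1) * q ≤ d) :
    ((∏ i, ((X i : MvPolynomial (Fin n) K) ^ q - X i) ^ e i) * monomial γ (1:K)).totalDegree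
      ≤ d := by
  have h1 : (∏ i, ((X i : MvPolynomial (Fin n) K) ^ q - X i) ^ e i).totalDegree
      ≤ (m - 1) * q := by
    refine le_trans (totalDegree_finset_prod _ _) ?_
    have hterm : ∀ i : Fin n,
        (((X i : MvPolynomial (Fin n) K) ^ q - X i) ^ e i).totalDegree ≤ e i * q := by
      intro i
      refine le_trans (totalDegree_pow _ _) ?_
      refine Nat.mul_le_mul_left _ ?_
      have hsub : ((X i : MvPolynomial (Fin n) K) ^ q - X i).totalDegree ≤ q := by
        rw [sub_eq_add_neg]
        refine le_trans (totalDegree_add _ _) ?_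
        rw [totalDegree_neg, totalDegree_X_pow, totalDegree_X]
        exact max_le le_rfl hqpos
      exact hsub
    refine le_trans (Finset.sum_le_sum fun i _ => hterm i) ?_
    rw [← Finset.sum_mul]
    exact Nat.mul_le_mul_right _ he
  have h2 : ((monomial γ (1:K)) : MvPolynomial (Fin n) K).totalDegree ≤ n * (q - 1) := by
    rw [totalDegree_monomial _ (one_ne_zero), deg_eq_sum]
    have : deg γ ≤ ∑ _i : Fin n, (q - 1) :=
      Finset.sum_le_sum fun i _ => by have := hγ i; omega
    refine le_trans this ?_
    rw [Finset.sum_const, Finset.card_univ, Fintype.card_fin, smul_eq_mul]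
  refine le_trans (totalDegree_mul _ _) (le_trans (add_le_add h1 h2) ?_)
  omega

/-- Splitting every polynomial into a low-degree part and a part vanishing to order `m`
everywhere. -/
lemma exists_degree_split {q m d : ℕ} (hq : Fintype.card K = q) (hm : 1 ≤ m)
    (hd : n * (q - 1) + (m - 1) * q ≤ d) (P : MvPolynomial (Fin n) K) :
    ∃ v w : MvPolynomial (Fin n) K, P = v + w ∧ v ∈ restrictTotalDegree (Fin n) K d ∧
      ∀ p : Fin n → K, w ∈ (mIdeal p) ^ m := by
  have hq2 : 2 ≤ q := hq ▸ Fintype.one_lt_card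
  have hsub : Submodule.span K (W q n K) ≤
      restrictTotalDegree (Fin n) K d ⊔
        Submodule.restrictScalars K (⨅ p : Fin n → K, (mIdeal p) ^ m) := by
    rw [Submodule.span_le]
    rintro w ⟨e, γ, hγ, rfl⟩
    rcases le_or_gt m (∑ i, e i) with hce | hce
    · apply Submodule.mem_sup_right
      rw [Submodule.restrictScalars_mem, Submodule.mem_iInf]
      intro p
      exact Ideal.mul_mem_right _ _ (Ideal.pow_le_pow_right hce (prod_grid_mem hq e p))
    · apply Submodule.mem_sup_left
      rw [mem_restrictTotalDegree]
      exact totalDegree_W_le (by omega) e γ hγ (by omega) hd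
  obtain ⟨v, hv, w, hw, hvw⟩ := Submodule.mem_sup.mp (hsub (mem_spanW hq2 P))
  rw [Submodule.restrictScalars_mem, Submodule.mem_iInf] at hw
  exact ⟨v, w, hvw.symm, hv, fun p => hw p⟩

end Grid

lemma mIdeal_injective : Function.Injective (mIdeal : (Fin n → K) → _) := by
  intro p p' h
  funext i
  have h1 : (X i - C (p i) : MvPolynomial (Fin n) K) ∈ mIdeal p := by
    rw [mem_mIdeal]; simp
  rw [h, mem_mIdeal] at h1
  simp only [map_sub, eval_X, eval_C, sub_eq_zero] at h1
  exact h1.symm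

lemma coprime_pow {p p' : Fin n → K} (h : p ≠ p') (m : ℕ) :
    IsCoprime ((mIdeal p) ^ m) ((mIdeal p') ^ m) := by
  refine IsCoprime.pow ?_
  rw [Ideal.isCoprime_iff_sup_eq]
  exact Ideal.IsMaximal.coprime_of_ne inferInstance
    inferInstance (fun he => h (mIdeal_injective he))


end S15

open S15


/-- over `F_q`, for `d ≥ n(q-1) + (m-1)q`,
`HF^m(Y, d) = C(m+n-1, n) · |Y|`. -/
theorem statement15 (K : Type*) [Field K] [Fintype K] (q n m : ℕ)
    (hq : Fintype.card K = q) (hn : 1 ≤ n) (hm : 1 ≤ m)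
    (Y : Set (Fin n → K)) (d : ℕ) (hd : n * (q - 1) + (m - 1) * q ≤ d) :
    HFm m Y d = (m + n - 1).choose n * Y.ncard := by
  classical
  haveI : Fintype Y := Y.toFinite.fintype
  set V := restrictTotalDegree (Fin n) K d with hV
  set Φ : V →ₗ[K] ((p : Y) → (MvPolynomial (Fin n) K ⧸ (mIdeal (p : Fin n → K)) ^ m)) :=
    LinearMap.pi (fun p => ((Ideal.Quotient.mkₐ K _).toLinearMap).comp V.subtype) with hΦ
  have hker : LinearMap.ker Φ =
      Submodule.comap V.subtype (Submodule.restrictScalars K (orderIdeal m Y)) := by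
    ext v
    simp only [LinearMap.mem_ker, hΦ, Submodule.mem_comap, Submodule.restrictScalars_mem,
      orderIdeal]
    rw [funext_iff]
    constructor
    · intro h
      rw [Submodule.mem_iInf]
      intro x
      rw [Submodule.mem_iInf]
      intro hx
      have := h ⟨x, hx⟩
      simp only [LinearMap.pi_apply, LinearMap.comp_apply, AlgHom.toLinearMap_apply,
        Ideal.Quotient.mkₐ_eq_mk, Submodule.subtype_apply, Pi.zero_apply] at this
      rwa [Ideal.Quotient.eq_zero_iff_mem] at this
    · intro h p
      simp only [LinearMap.pi_apply, LinearMap.comp_apply, AlgHom.toLinearMap_apply,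
        Ideal.Quotient.mkₐ_eq_mk, Submodule.subtype_apply, Pi.zero_apply]
      rw [Ideal.Quotient.eq_zero_iff_mem]
      have h1 := (Submodule.mem_iInf _).mp h (p : Fin n → K)
      exact (Submodule.mem_iInf _).mp h1 p.2
  have hsurj : Function.Surjective Φ := by
    intro f
    have hcop : Pairwise fun (p p' : Y) =>
        IsCoprime ((mIdeal (p : Fin n → K)) ^ m) ((mIdeal (p' : Fin n → K)) ^ m) := by
      intro p p' hpp'
      exact coprime_pow (fun he => hpp' (Subtype.ext he)) m
    obtain ⟨r, hr⟩ := Ideal.pi_quotient_surjective hcop f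
    obtain ⟨v, w, hvw, hv, hw⟩ := exists_degree_split hq hm hd r
    refine ⟨⟨v, hv⟩, ?_⟩
    funext p
    simp only [hΦ, LinearMap.pi_apply, LinearMap.comp_apply, AlgHom.toLinearMap_apply,
      Ideal.Quotient.mkₐ_eq_mk, Submodule.subtype_apply]
    rw [← hr p]
    rw [Ideal.Quotient.eq]
    rw [hvw]
    simpa using Submodule.neg_mem _ (hw (p : Fin n → K))
  haveI : ∀ p : Y, Module.Finite K (MvPolynomial (Fin n) K ⧸ (mIdeal (p : Fin n → K)) ^ m) :=
    fun p => finite_quot _ m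
  have heq := (LinearMap.quotKerEquivOfSurjective Φ hsurj).finrank_eq
  rw [hker] at heq
  show affineHF (orderIdeal m Y) d = _
  rw [affineHF]
  rw [heq, Module.finrank_pi_fintype]
  rw [show (∑ p : Y, Module.finrank K (MvPolynomial (Fin n) K ⧸ (mIdeal (p : Fin n → K)) ^ m))
      = ∑ _p : Y, (m + n - 1).choose n from
    Finset.sum_congr rfl (fun p _ => finrank_quot (p : Fin n → K) m hn hm)]
  rw [Finset.sum_const, Finset.card_univ, smul_eq_mul,
    ← Nat.card_coe_set_eq, Nat.card_eq_fintype_card, mul_comm]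


end
end

section
/- Let k be a field and let I be an ideal of k[x_1,…,x_n]. Then for all integers m_1 ≥ m_2 ≥ 0, HF_I(m_1) · C(n+m_2, n) ≤ HF_I(m_2) · C(n+m_1, n), where C(a, n) denotes the binomial coefficient. -/
open MvPolynomial

noncomputable section

open Pointwise in
section

namespace Stmt17

variable {k : Type*} [Field k] {n : ℕ}

/-! ### Degree-lex monomial order -/

abbrev DL (n : ℕ) := ℕ ×ₗ Lex (Fin n →₀ ℕ)

def deg (α : Fin n →₀ ℕ) : ℕ := α.sum fun _ e => e

def toDL (α : Fin n →₀ ℕ) : DL n := toLex (deg α, toLex α)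

lemma toDL_lt_iff {a b : Fin n →₀ ℕ} :
    toDL a < toDL b ↔ deg a < deg b ∨ (deg a = deg b ∧ toLex a < toLex b) :=
  Prod.Lex.lt_iff

lemma toDL_le_iff {a b : Fin n →₀ ℕ} :
    toDL a ≤ toDL b ↔ deg a < deg b ∨ (deg a = deg b ∧ toLex a ≤ toLex b) :=
  Prod.Lex.le_iff

lemma toDL_inj : Function.Injective (toDL (n := n)) := by
  intro a b h
  have := (Prod.ext_iff.mp
    (ofLex.injective.eq_iff.mpr (congrArg ofLex h) ▸ rfl : ofLex (toDL a) = ofLex (toDL b))).2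
  exact toLex.injective this

lemma deg_add (a b : Fin n →₀ ℕ) : deg (a + b) = deg a + deg b := by
  simp [deg, Finsupp.sum_add_index']

lemma toDL_add_lt {a b : Fin n →₀ ℕ} (c : Fin n →₀ ℕ) (h : toDL a < toDL b) :
    toDL (c + a) < toDL (c + b) := by
  rcases toDL_lt_iff.mp h with h | ⟨h1, h2⟩
  · exact toDL_lt_iff.mpr (Or.inl (by simp [deg_add]; omega))
  · refine toDL_lt_iff.mpr (Or.inr ⟨by simp [deg_add, h1], ?_⟩)
    have : toLex c + toLex a < toLex c + toLex b := add_lt_add_right h2 _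
    exact this

lemma toDL_add_le {a b : Fin n →₀ ℕ} (c : Fin n →₀ ℕ) (h : toDL a ≤ toDL b) :
    toDL (c + a) ≤ toDL (c + b) := by
  rcases eq_or_lt_of_le h with h | h
  · exact le_of_eq (by rw [toDL_inj h])
  · exact (toDL_add_lt c h).le

lemma deg_mono {a b : Fin n →₀ ℕ} (h : toDL a ≤ toDL b) : deg a ≤ deg b := by
  rcases toDL_le_iff.mp h with h | ⟨h1, _⟩ <;> omega

/-! ### Leading monomials -/

open Classical in
def lm (p : MvPolynomial (Fin n) k) : Fin n →₀ ℕ :=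
  if h : p = 0 then 0 else
    (p.support.exists_max_image toDL (support_nonempty.mpr h)).choose

lemma lm_mem {p : MvPolynomial (Fin n) k} (hp : p ≠ 0) : lm p ∈ p.support := by
  classical rw [lm, dif_neg hp]
  exact (p.support.exists_max_image toDL (support_nonempty.mpr hp)).choose_spec.1

lemma le_lm {p : MvPolynomial (Fin n) k} (hp : p ≠ 0) {a} (ha : a ∈ p.support) :
    toDL a ≤ toDL (lm p) := by
  classical rw [lm, dif_neg hp]
  exact (p.support.exists_max_image toDL (support_nonempty.mpr hp)).choose_spec.2 a ha

lemma coeff_lm_ne {p : MvPolynomial (Fin n) k} (hp : p ≠ 0) : coeff (lm p) p ≠ 0 :=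
  mem_support_iff.mp (lm_mem hp)

lemma totalDegree_eq_deg_lm {p : MvPolynomial (Fin n) k} (hp : p ≠ 0) :
    p.totalDegree = deg (lm p) := by
  apply le_antisymm
  · rw [totalDegree]
    exact Finset.sup_le fun a ha => deg_mono (le_lm hp ha)
  · exact le_totalDegree (lm_mem hp)

lemma monomial_mul_ne_zero {p : MvPolynomial (Fin n) k} (hp : p ≠ 0) (γ : Fin n →₀ ℕ) :
    monomial γ (1 : k) * p ≠ 0 := by
  intro h
  have hc : coeff (γ + lm p) (monomial γ (1:k) * p) = coeff (lm p) p := by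
    rw [coeff_monomial_mul, one_mul]
  rw [h, coeff_zero] at hc
  exact coeff_lm_ne hp hc.symm

lemma lm_monomial_mul {p : MvPolynomial (Fin n) k} (hp : p ≠ 0) (γ : Fin n →₀ ℕ) :
    lm (monomial γ (1 : k) * p) = γ + lm p := by
  classical
  have hne := monomial_mul_ne_zero hp γ
  have hc : coeff (γ + lm p) (monomial γ (1:k) * p) = coeff (lm p) p := by
    rw [coeff_monomial_mul, one_mul]
  apply toDL_inj
  apply le_antisymm
  · have hmem := lm_mem hne
    have hsub := support_mul (monomial γ (1:k)) p
    have := hsub hmem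
    rw [Finset.mem_add] at this
    obtain ⟨x, hx, a, ha, hxa⟩ := this
    have hxγ : x = γ := by
      have := support_monomial_subset (s := γ) (a := (1:k)) hx
      simpa using this
    rw [← hxa, hxγ]
    exact toDL_add_le γ (le_lm hp ha)
  · exact le_lm hne (mem_support_iff.mpr (by rw [hc]; exact coeff_lm_ne hp))

/-! ### The set of leading monomials of an ideal -/

def LMset (I : Ideal (MvPolynomial (Fin n) k)) : Set (Fin n →₀ ℕ) :=
  {α | ∃ p ∈ I, p ≠ 0 ∧ lm p = α}

lemma LMset_upward {I : Ideal (MvPolynomial (Fin n) k)} {α β : Fin n →₀ ℕ}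
    (hα : α ∈ LMset I) (h : α ≤ β) : β ∈ LMset I := by
  obtain ⟨γ, rfl⟩ := le_iff_exists_add.mp h
  obtain ⟨p, hpI, hp0, hlm⟩ := hα
  exact ⟨monomial γ 1 * p, I.mul_mem_left _ hpI, monomial_mul_ne_zero hp0 γ,
    by rw [lm_monomial_mul hp0 γ, hlm, add_comm]⟩

/-! ### Finite balls and counting -/

lemma ball_finite (d : ℕ) : {α : Fin n →₀ ℕ | deg α ≤ d}.Finite := by
  have h1 : {f : Fin n →₀ ℕ | ∀ a, f a ≤ d}.Finite :=
    (Set.Finite.pi' fun _ ↦ Set.finite_le_nat _).preimage DFunLike.coe_injective.injOn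
  refine h1.subset fun α hα i => ?_
  rcases eq_or_ne (α i) 0 with h | h
  · omega
  · exact le_trans (Finset.single_le_sum (fun _ _ => Nat.zero_le _)
      (Finsupp.mem_support_iff.mpr h)) hα

open Classical in
def Fd (S : Set (Fin n →₀ ℕ)) (d : ℕ) : Finset (Fin n →₀ ℕ) :=
  (ball_finite d).toFinset.filter (· ∈ S)

lemma mem_Fd {S : Set (Fin n →₀ ℕ)} {d : ℕ} {α : Fin n →₀ ℕ} :
    α ∈ Fd S d ↔ deg α ≤ d ∧ α ∈ S := by
  classical
  rw [Fd]
  simp [Finset.mem_filter, Set.Finite.mem_toFinset]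

lemma count_step (S : Set (Fin n →₀ ℕ))
    (hS : ∀ ⦃a b : Fin n →₀ ℕ⦄, a ≤ b → b ∈ S → a ∈ S) (d : ℕ) :
    (d + 1) * (Fd S (d+1)).card ≤ (n + d + 1) * (Fd S d).card := by
  classical
  have degexp : ∀ β : Fin n →₀ ℕ, deg β = ∑ i : Fin n, β i := fun β =>
    Finsupp.sum_fintype _ _ (fun _ => rfl)
  have keyB : ∀ i : Fin n, ∑ β ∈ Fd S (d+1), β i ≤ ∑ α ∈ Fd S d, (α i + 1) := by
    intro i
    set F' := (Fd S (d+1)).filter (fun β => β i ≠ 0) with hF'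
    set g : (Fin n →₀ ℕ) → (Fin n →₀ ℕ) := fun β => β - Finsupp.single i 1 with hgdef
    have hg : ∀ β ∈ F', g β + Finsupp.single i 1 = β := by
      intro β hβ
      have h1 : Finsupp.single i 1 ≤ β := by
        rw [Finsupp.single_le_iff]
        have := (Finset.mem_filter.mp hβ).2
        omega
      exact tsub_add_cancel_of_le h1
    have hgi : ∀ β ∈ F', β i = (g β) i + 1 := by
      intro β hβ
      have := congrArg (fun f : Fin n →₀ ℕ => f i) (hg β hβ)
      simp [Finsupp.single_apply] at this
      omega
    have hgmem : ∀ β ∈ F', g β ∈ Fd S d := by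
      intro β hβ
      obtain ⟨hβd, hβS⟩ := mem_Fd.mp (Finset.mem_filter.mp hβ).1
      have hle : g β ≤ β := tsub_le_self
      refine mem_Fd.mpr ⟨?_, hS hle hβS⟩
      have hdg : deg (g β) + 1 = deg β := by
        conv_rhs => rw [← hg β hβ]
        rw [deg_add]
        simp [deg, Finsupp.sum_single_index]
      omega
    calc ∑ β ∈ Fd S (d+1), β i = ∑ β ∈ F', β i := by
          rw [hF']
          exact (Finset.sum_filter_of_ne (fun x _ h => h)).symm
      _ = ∑ β ∈ F', ((g β) i + 1) := Finset.sum_congr rfl fun β hβ => hgi β hβ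
      _ = ∑ α ∈ F'.image g, (α i + 1) := by
          rw [Finset.sum_image]
          intro a ha b hb hab
          rw [← hg a ha, ← hg b hb, hab]
      _ ≤ ∑ α ∈ Fd S d, (α i + 1) :=
          Finset.sum_le_sum_of_subset (Finset.image_subset_iff.mpr hgmem)
  have keyA : ∑ β ∈ Fd S (d+1), (d + 1 - deg β) = ∑ α ∈ Fd S d, (d + 1 - deg α) := by
    symm
    apply Finset.sum_subset
    · intro α hα
      rw [mem_Fd] at hα ⊢
      exact ⟨hα.1.trans (by omega), hα.2⟩
    · intro β hβ hnβ
      rw [mem_Fd] at hβ hnβ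
      have : ¬ deg β ≤ d := fun h => hnβ ⟨h, hβ.2⟩
      omega
  calc (d + 1) * (Fd S (d+1)).card = ∑ _β ∈ Fd S (d+1), (d+1) := by
        rw [Finset.sum_const, smul_eq_mul, mul_comm]
    _ = ∑ β ∈ Fd S (d+1), ((d + 1 - deg β) + deg β) := by
        refine Finset.sum_congr rfl fun β hβ => ?_
        have := (mem_Fd.mp hβ).1
        omega
    _ = (∑ β ∈ Fd S (d+1), (d + 1 - deg β)) + ∑ β ∈ Fd S (d+1), deg β :=
        Finset.sum_add_distrib
    _ ≤ (∑ α ∈ Fd S d, (d + 1 - deg α)) + ∑ α ∈ Fd S d, (deg α + n) := by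
        refine add_le_add (le_of_eq keyA) ?_
        calc ∑ β ∈ Fd S (d+1), deg β = ∑ β ∈ Fd S (d+1), ∑ i : Fin n, β i :=
              Finset.sum_congr rfl fun β _ => degexp β
          _ = ∑ i : Fin n, ∑ β ∈ Fd S (d+1), β i := Finset.sum_comm
          _ ≤ ∑ i : Fin n, ∑ α ∈ Fd S d, (α i + 1) := Finset.sum_le_sum fun i _ => keyB i
          _ = ∑ α ∈ Fd S d, ∑ i : Fin n, (α i + 1) := Finset.sum_comm
          _ = ∑ α ∈ Fd S d, (deg α + n) := by
              refine Finset.sum_congr rfl fun α _ => ?_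
              rw [Finset.sum_add_distrib, ← degexp α]
              simp
    _ = ∑ α ∈ Fd S d, (n + d + 1) := by
        rw [← Finset.sum_add_distrib]
        refine Finset.sum_congr rfl fun α hα => ?_
        have := (mem_Fd.mp hα).1
        omega
    _ = (n + d + 1) * (Fd S d).card := by rw [Finset.sum_const, smul_eq_mul, mul_comm]

lemma binom_id (n m : ℕ) : (n + m + 1) * (n + m).choose n = (m + 1) * ((n + m + 1).choose n) := by
  have h1 : (n + m).choose n = (n + m).choose m := by
    rw [← Nat.choose_symm (by omega : m ≤ n + m)]
    congr 1
    omega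
  have h2 : (n + m + 1).choose n = (n + m + 1).choose (m + 1) := by
    rw [← Nat.choose_symm (by omega : (m+1) ≤ n + m + 1)]
    congr 1
    omega
  rw [h1, h2]
  have := Nat.add_one_mul_choose_eq (n + m) m
  simpa [Nat.succ_eq_add_one, mul_comm] using this

lemma count_chain (S : Set (Fin n →₀ ℕ))
    (hS : ∀ ⦃a b : Fin n →₀ ℕ⦄, a ≤ b → b ∈ S → a ∈ S) {m₂ m₁ : ℕ} (h : m₂ ≤ m₁) :
    (Fd S m₁).card * (n + m₂).choose n ≤ (Fd S m₂).card * (n + m₁).choose n := by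
  induction m₁ with
  | zero =>
    have : m₂ = 0 := by omega
    subst this; exact le_rfl
  | succ m ih =>
    rcases Nat.eq_or_lt_of_le h with h' | h'
    · subst h'; exact le_rfl
    · have hm : m₂ ≤ m := by omega
      have ih' := ih hm
      have step := count_step S hS m
      have key : (m+1) * ((Fd S (m+1)).card * (n + m₂).choose n)
          ≤ (m+1) * ((Fd S m₂).card * (n + (m+1)).choose n) := by
        calc (m+1) * ((Fd S (m+1)).card * (n + m₂).choose n)
            = ((m+1) * (Fd S (m+1)).card) * (n + m₂).choose n := by ring
          _ ≤ ((n+m+1) * (Fd S m).card) * (n + m₂).choose n := Nat.mul_le_mul_right _ step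
          _ = (n+m+1) * ((Fd S m).card * (n + m₂).choose n) := by ring
          _ ≤ (n+m+1) * ((Fd S m₂).card * (n + m).choose n) := Nat.mul_le_mul_left _ ih'
          _ = (Fd S m₂).card * ((n+m+1) * (n + m).choose n) := by ring
          _ = (Fd S m₂).card * ((m+1) * ((n+m+1).choose n)) := by rw [binom_id]
          _ = (m+1) * ((Fd S m₂).card * ((n+m+1).choose n)) := by ring
          _ = (m+1) * ((Fd S m₂).card * ((n+(m+1)).choose n)) := by rw [show n+(m+1) = n+m+1 from rfl]
      exact Nat.le_of_mul_le_mul_left key (by omega)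

/-! ### The Hilbert function counts standard monomials -/

theorem affineHF_eq (I : Ideal (MvPolynomial (Fin n) k)) (d : ℕ) :
    affineHF I d = (Fd ((LMset I)ᶜ) d).card := by
  classical
  set V := restrictTotalDegree (Fin n) k d with hV
  set W : Submodule k (MvPolynomial (Fin n) k) := Submodule.restrictScalars k I ⊓ V with hW
  set P : Submodule k (MvPolynomial (Fin n) k) :=
    restrictSupport k ↑(Fd ((LMset I)ᶜ) d) with hP
  have mem_P : ∀ p : MvPolynomial (Fin n) k,
      p ∈ P ↔ ∀ α ∈ p.support, deg α ≤ d ∧ α ∉ LMset I := by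
    intro p
    rw [hP, mem_restrictSupport_iff]
    constructor
    · intro h α hα
      have := h hα
      rw [Finset.mem_coe, mem_Fd] at this
      exact this
    · intro h α hα
      rw [Finset.mem_coe, mem_Fd]
      exact h α hα
  have hPV : P ≤ V := by
    rw [hP, hV, restrictTotalDegree]
    apply restrictSupport_mono
    intro α hα
    rw [Finset.mem_coe, mem_Fd] at hα
    exact hα.1
  -- independence
  have hPI : P ⊓ Submodule.restrictScalars k I = ⊥ := by
    rw [eq_bot_iff]
    rintro p hp
    rw [Submodule.mem_inf] at hp
    obtain ⟨hpP, hpI⟩ := hp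
    rw [Submodule.mem_bot]
    by_contra hp0
    have h1 : lm p ∈ LMset I := ⟨p, hpI, hp0, rfl⟩
    exact ((mem_P p).mp hpP (lm p) (lm_mem hp0)).2 h1
  -- spanning
  have main : ∀ v : DL n, ∀ p : MvPolynomial (Fin n) k, toDL (lm p) = v → p ≠ 0 →
      p.totalDegree ≤ d → p ∈ P ⊔ W := by
    intro v
    induction v using WellFoundedLT.induction with
    | _ v IH =>
    intro p hv hp0 hpd
    have hlmd : deg (lm p) ≤ d := by rw [← totalDegree_eq_deg_lm hp0]; exact hpd
    by_cases hα : lm p ∈ LMset I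
    · obtain ⟨q, hqI, hq0, hlmq⟩ := hα
      have hcq : coeff (lm p) q ≠ 0 := by rw [← hlmq]; exact coeff_lm_ne hq0
      set c : k := coeff (lm p) p / coeff (lm p) q with hc
      have hqd : q.totalDegree ≤ d := by rw [totalDegree_eq_deg_lm hq0, hlmq]; exact hlmd
      have hsmuld : (c • q).totalDegree ≤ d := by
        refine le_trans ?_ hqd
        rw [totalDegree, totalDegree]
        exact Finset.sup_mono support_smul
      have hcqW : c • q ∈ W := by
        rw [hW]
        exact Submodule.mem_inf.mpr
          ⟨(Submodule.restrictScalars k I).smul_mem c hqI,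
           (mem_restrictTotalDegree _ _ _).mpr hsmuld⟩
      set g := p - c • q with hg
      have hpg : p = g + c • q := by rw [hg]; ring
      have hgd : g.totalDegree ≤ d :=
        le_trans (totalDegree_sub p (c • q)) (max_le hpd hsmuld)
      have hgcoeff : coeff (lm p) g = 0 := by
        rw [hg, coeff_sub, MvPolynomial.coeff_smul, hc, smul_eq_mul,
          div_mul_cancel₀ _ hcq, sub_self]
      have hsupg : ∀ β ∈ g.support, toDL β < toDL (lm p) := by
        intro β hβ
        have hβα : β ≠ lm p := fun h => (mem_support_iff.mp hβ) (h ▸ hgcoeff)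
        have hβ2 : β ∈ p.support ∪ (c • q).support := support_sub _ _ _ hβ
        have hle : toDL β ≤ toDL (lm p) := by
          rcases Finset.mem_union.mp hβ2 with h | h
          · exact le_lm hp0 h
          · have : β ∈ q.support := support_smul h
            have := le_lm hq0 this
            rwa [hlmq] at this
        exact lt_of_le_of_ne hle (fun h => hβα (toDL_inj h))
      by_cases hg0 : g = 0
      · rw [hpg, hg0, zero_add]
        exact Submodule.mem_sup_right hcqW
      · have hlt : toDL (lm g) < v := hv ▸ hsupg _ (lm_mem hg0)
        have hgmem := IH _ hlt g rfl hg0 hgd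
        rw [hpg]
        exact Submodule.add_mem _ hgmem (Submodule.mem_sup_right hcqW)
    · set c : k := coeff (lm p) p with hc
      have hc0 : c ≠ 0 := coeff_lm_ne hp0
      have hmonoP : (monomial (lm p) c : MvPolynomial (Fin n) k) ∈ P := by
        rw [mem_P]
        intro β hβ
        have : β = lm p := by simpa using support_monomial_subset hβ
        rw [this]
        exact ⟨hlmd, hα⟩
      have hmonod : (monomial (lm p) c : MvPolynomial (Fin n) k).totalDegree ≤ d := by
        rw [totalDegree_monomial _ hc0]
        exact hlmd
      set g := p - monomial (lm p) c with hg
      have hpg : p = g + monomial (lm p) c := by rw [hg]; ring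
      have hgd : g.totalDegree ≤ d :=
        le_trans (totalDegree_sub p _) (max_le hpd hmonod)
      have hgcoeff : coeff (lm p) g = 0 := by
        rw [hg, coeff_sub, coeff_monomial]
        simp [hc]
      have hsupg : ∀ β ∈ g.support, toDL β < toDL (lm p) := by
        intro β hβ
        have hβα : β ≠ lm p := fun h => (mem_support_iff.mp hβ) (h ▸ hgcoeff)
        have hβ2 : β ∈ p.support ∪ (monomial (lm p) c).support := support_sub _ _ _ hβ
        have hle : toDL β ≤ toDL (lm p) := by
          rcases Finset.mem_union.mp hβ2 with h | h
          · exact le_lm hp0 h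
          · have : β = lm p := by simpa using support_monomial_subset h
            rw [this]
        exact lt_of_le_of_ne hle (fun h => hβα (toDL_inj h))
      by_cases hg0 : g = 0
      · rw [hpg, hg0, zero_add]
        exact Submodule.mem_sup_left hmonoP
      · have hlt : toDL (lm g) < v := hv ▸ hsupg _ (lm_mem hg0)
        have hgmem := IH _ hlt g rfl hg0 hgd
        rw [hpg]
        exact Submodule.add_mem _ hgmem (Submodule.mem_sup_left hmonoP)
  have hVle : V ≤ P ⊔ W := by
    intro p hp
    by_cases hp0 : p = 0
    · rw [hp0]; exact zero_mem _
    · exact main _ p rfl hp0 ((mem_restrictTotalDegree _ _ _).mp hp)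
  -- finrank assembly
  haveI : FiniteDimensional k V := by rw [hV]; infer_instance
  haveI hWfd : FiniteDimensional k W := Submodule.finiteDimensional_of_le inf_le_right
  haveI hPfd : FiniteDimensional k P := Submodule.finiteDimensional_of_le hPV
  have hPW : P ⊓ W = ⊥ := by
    rw [eq_bot_iff, ← hPI]
    exact inf_le_inf_left P inf_le_left
  have hPWV : P ⊔ W = V := le_antisymm (sup_le hPV inf_le_right) hVle
  have h1 : Module.finrank k P + Module.finrank k W = Module.finrank k V := by
    have := Submodule.finrank_sup_add_finrank_inf_eq P W
    rw [hPW, hPWV] at this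
    simpa [finrank_bot] using this.symm
  set U := Submodule.comap V.subtype (Submodule.restrictScalars k I) with hU
  have h2 : Module.finrank k (V ⧸ U) + Module.finrank k U = Module.finrank k V :=
    Submodule.finrank_quotient_add_finrank U
  have h3 : Module.finrank k U = Module.finrank k W := by
    have hUW : U = Submodule.comap V.subtype W := by
      rw [hU, hW, Submodule.comap_inf, Submodule.comap_subtype_self, inf_top_eq]
    rw [hUW]
    exact (Submodule.comapSubtypeEquivOfLe inf_le_right).finrank_eq
  have h4 : Module.finrank k P = (Fd ((LMset I)ᶜ) d).card := by
    letI : Fintype ↥(↑(Fd ((LMset I)ᶜ) d) : Set (Fin n →₀ ℕ)) := FinsetCoe.fintype _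
    rw [hP, Module.finrank_eq_card_basis (basisRestrictSupport k _)]
    simp [Finset.coe_sort_coe]
  have : affineHF I d = Module.finrank k (V ⧸ U) := rfl
  omega

end Stmt17

end

/-- `HF_I(m₁) · C(n+m₂, n) ≤ HF_I(m₂) · C(n+m₁, n)` for `m₁ ≥ m₂`. -/
theorem statement17 (k : Type*) [Field k] (n : ℕ) (I : Ideal (MvPolynomial (Fin n) k))
    (m₁ m₂ : ℕ) (h : m₂ ≤ m₁) :
    affineHF I m₁ * (n + m₂).choose n ≤ affineHF I m₂ * (n + m₁).choose n := by
  rw [Stmt17.affineHF_eq I m₁, Stmt17.affineHF_eq I m₂]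
  exact Stmt17.count_chain ((Stmt17.LMset I)ᶜ)
    (fun a b hab hb ha => hb (Stmt17.LMset_upward ha hab)) h

end
end

section
/- Let S be a finite subset of ℕ^n and let d ≥ 0. Define S^+ = S ∪ ⋃_{i=1}^n (S + e_i), where e_i is the i-th standard unit vector, and for T ⊆ ℕ^n let T_{≤d} denote the set of points of T whose coordinate sum is at most d. Then (d+1) · |(S^+)_{≤ d+1}| ≥ (n+d+1) · |S_{≤ d}|. -/
open MvPolynomial

noncomputable section

/-- `(d+1)·|(S⁺)_{≤ d+1}| ≥ (n+d+1)·|S_{≤ d}|`. -/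
theorem statement18 (n d : ℕ) (S : Set (Fin n → ℕ)) (hS : S.Finite) :
    (n + d + 1) * {a ∈ S | ∑ j, a j ≤ d}.ncard ≤
    (d + 1) *
      {a ∈ S ∪ ⋃ i : Fin n, (fun a => a + Pi.single i 1) '' S |
        ∑ j, a j ≤ d + 1}.ncard := by
  classical
  set F := hS.toFinset with hF
  set A := F.filter (fun a => ∑ j, a j ≤ d) with hA
  set B := (F ∪ Finset.univ.biUnion
      (fun i : Fin n => F.image (fun a => a + Pi.single i 1))).filter
      (fun b => ∑ j, b j ≤ d + 1) with hB
  have hAset : {a ∈ S | ∑ j, a j ≤ d} = ↑A := by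
    ext a; simp [hA, hF, hS.mem_toFinset]
  have hBset : {a ∈ S ∪ ⋃ i : Fin n, (fun a => a + Pi.single i 1) '' S |
      ∑ j, a j ≤ d + 1} = ↑B := by
    ext b; simp [hB, hF, hS.mem_toFinset]
  rw [hAset, hBset, Set.ncard_coe_finset, Set.ncard_coe_finset]
  set W : (Fin n → ℕ) → (Fin n → ℕ) → ℕ := fun a b =>
    (if b = a then d + 1 - ∑ j, a j else 0) +
      ∑ i : Fin n, (if b = a + Pi.single i 1 then b i else 0) with hW
  have hsum_single : ∀ (a : Fin n → ℕ) (i : Fin n),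
      (∑ j, (a j + (Pi.single i 1 : Fin n → ℕ) j)) = (∑ j, a j) + 1 := by
    intro a i
    simp [Finset.sum_add_distrib, Finset.sum_pi_single']
  have hmemB : ∀ a ∈ A, a ∈ B := by
    intro a ha
    rw [hA, Finset.mem_filter] at ha
    rw [hB, Finset.mem_filter]
    exact ⟨Finset.mem_union_left _ ha.1, le_trans ha.2 (by omega)⟩
  have hmemB' : ∀ a ∈ A, ∀ i : Fin n, a + Pi.single i 1 ∈ B := by
    intro a ha i
    rw [hA, Finset.mem_filter] at ha
    rw [hB, Finset.mem_filter]
    constructor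
    · refine Finset.mem_union_right _ (Finset.mem_biUnion.2 ⟨i, Finset.mem_univ _, ?_⟩)
      exact Finset.mem_image_of_mem _ ha.1
    · simp only [Pi.add_apply]
      rw [hsum_single]; omega
  have key : ∀ a ∈ A, ∑ b ∈ B, W a b = n + d + 1 := by
    intro a ha
    have haA := ha
    rw [hA, Finset.mem_filter] at haA
    rw [hW]
    simp only
    rw [Finset.sum_add_distrib, Finset.sum_comm (s := B)]
    have h1 : (∑ b ∈ B, if b = a then d + 1 - ∑ j, a j else 0) = d + 1 - ∑ j, a j := by
      rw [Finset.sum_ite_eq' B a (fun _ => d + 1 - ∑ j, a j)]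
      simp [hmemB a ha]
    have h2 : ∀ i : Fin n,
        (∑ b ∈ B, if b = a + Pi.single i 1 then b i else 0) = a i + 1 := by
      intro i
      rw [Finset.sum_ite_eq' B (a + Pi.single i 1) (fun b => b i)]
      simp [hmemB' a ha i, Pi.add_apply, Pi.single_eq_same]
    rw [h1, Finset.sum_congr rfl (fun i _ => h2 i), Finset.sum_add_distrib]
    simp only [Finset.sum_const, Finset.card_univ, Fintype.card_fin, smul_eq_mul, mul_one]
    omega
  have key2 : ∀ b ∈ B, ∑ a ∈ A, W a b ≤ d + 1 := by
    intro b hb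
    have hbB := hb
    rw [hB, Finset.mem_filter] at hbB
    rw [hW]
    simp only
    rw [Finset.sum_add_distrib, Finset.sum_comm (s := A)]
    have h1 : (∑ a ∈ A, if b = a then d + 1 - ∑ j, a j else 0) ≤ d + 1 - ∑ j, b j := by
      rw [Finset.sum_ite_eq A b (fun a => d + 1 - ∑ j, a j)]
      split <;> omega
    have h2 : ∀ i : Fin n,
        (∑ a ∈ A, if b = a + Pi.single i 1 then b i else 0) ≤ b i := by
      intro i
      have : (∑ a ∈ A, if b = a + Pi.single i 1 then b i else 0)
          = (A.filter (fun a => b = a + Pi.single i 1)).card * b i := by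
        rw [← Finset.sum_filter, Finset.sum_const, smul_eq_mul]
      rw [this]
      have hcard : (A.filter (fun a => b = a + Pi.single i 1)).card ≤ 1 := by
        apply Finset.card_le_one.2
        intro a ha a' ha'
        rw [Finset.mem_filter] at ha ha'
        have := ha.2.symm.trans ha'.2
        exact add_right_cancel this
      calc (A.filter (fun a => b = a + Pi.single i 1)).card * b i
          ≤ 1 * b i := Nat.mul_le_mul_right _ hcard
        _ = b i := one_mul _
    calc (∑ a ∈ A, if b = a then d + 1 - ∑ j, a j else 0) +
          ∑ i : Fin n, ∑ a ∈ A, (if b = a + Pi.single i 1 then b i else 0)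
        ≤ (d + 1 - ∑ j, b j) + ∑ i : Fin n, b i :=
          Nat.add_le_add h1 (Finset.sum_le_sum (fun i _ => h2 i))
      _ = (d + 1 - ∑ j, b j) + ∑ j, b j := rfl
      _ = d + 1 := Nat.sub_add_cancel hbB.2
  calc (n + d + 1) * A.card = ∑ a ∈ A, (n + d + 1) := by
        rw [Finset.sum_const, smul_eq_mul, mul_comm]
    _ = ∑ a ∈ A, ∑ b ∈ B, W a b := (Finset.sum_congr rfl (fun a ha => (key a ha).symm))
    _ = ∑ b ∈ B, ∑ a ∈ A, W a b := Finset.sum_comm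
    _ ≤ ∑ b ∈ B, (d + 1) := Finset.sum_le_sum key2
    _ = (d + 1) * B.card := by rw [Finset.sum_const, smul_eq_mul, mul_comm]


end
end

section
/- Let q be a prime power, n ≥ 1, m ≥ 1, ℓ ≥ 1, d ≥ 0, and let Y be a subset of F_q^n. Then HF^ℓ(F_q^n, d) · |cl_d^{ℓ,m}(Y)| ≤ q^n · C(m+n−1, n) · |Y|, where C(m+n−1, n) is the binomial coefficient. In particular (taking ℓ = m), HF^m(F_q^n, d) · |Y| ≤ HF^m(Y, d) · q^n holds for every Y ⊆ F_q^n. -/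
open MvPolynomial

noncomputable section

namespace S19


variable {K : Type*} [Field K] {n : ℕ}

local instance : DecidableEq (Fin n → K) := Classical.decEq _

/-- Translation substitution `P(X) ↦ P(X + a)`. -/
def tr (a : Fin n → K) : MvPolynomial (Fin n) K →ₐ[K] MvPolynomial (Fin n) K :=
  aeval fun i => X i + C (a i)

lemma tr_comp (a b : Fin n → K) : (tr a).comp (tr b) = tr (a + b) := by
  rw [tr, tr, comp_aeval]
  congr 1
  funext i
  simp only [tr, map_add, aeval_X, aeval_C, Pi.add_apply, C_add, algebraMap_eq]
  ring

lemma tr_zero : tr (0 : Fin n → K) = AlgHom.id K _ := by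
  rw [tr]
  simp only [Pi.zero_apply, map_zero, add_zero]
  exact aeval_X_left

lemma tr_tr (a b : Fin n → K) (P : MvPolynomial (Fin n) K) :
    tr a (tr b P) = tr (a + b) P := by
  rw [← AlgHom.comp_apply, tr_comp]

lemma tr_tr_cancel (a : Fin n → K) (P : MvPolynomial (Fin n) K) :
    tr a (tr (-a) P) = P := by
  rw [tr_tr, add_neg_cancel, tr_zero, AlgHom.id_apply]

lemma eval_tr (x a : Fin n → K) (P : MvPolynomial (Fin n) K) :
    eval x (tr a P) = eval (x + a) P := by
  have h : ((aeval x : MvPolynomial (Fin n) K →ₐ[K] K).comp (tr a)) =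
      (aeval (x + a) : MvPolynomial (Fin n) K →ₐ[K] K) := by
    rw [tr, comp_aeval]
    congr 1
    funext i
    simp
  have he : ∀ (y : Fin n → K) (Q : MvPolynomial (Fin n) K), eval y Q = aeval y Q := by
    intro y Q
    rw [← coe_aeval_eq_eval]
    rfl
  rw [he, he, ← h, AlgHom.comp_apply]


lemma totalDegree_tr_le (a : Fin n → K) (P : MvPolynomial (Fin n) K) :
    (tr a P).totalDegree ≤ P.totalDegree := by
  conv_lhs => rw [P.as_sum]
  rw [map_sum]
  refine (totalDegree_finset_sum _ _).trans ?_
  apply Finset.sup_le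
  intro s hs
  rw [tr, aeval_monomial]
  refine (totalDegree_mul _ _).trans ?_
  have h0 : (algebraMap K (MvPolynomial (Fin n) K) (coeff s P)).totalDegree = 0 := by
    rw [algebraMap_eq]; exact totalDegree_C _
  rw [h0, zero_add]
  refine le_trans ?_ (le_totalDegree hs)
  rw [Finsupp.prod]
  refine (totalDegree_finset_prod _ _).trans ?_
  rw [Finsupp.sum]
  apply Finset.sum_le_sum
  intro i _
  refine (totalDegree_pow _ _).trans ?_
  have h1 : (X (R := K) i + C (a i)).totalDegree ≤ 1 := by
    refine (totalDegree_add _ _).trans ?_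
    simp [totalDegree_X, totalDegree_C]
  calc s i * (X (R := K) i + C (a i)).totalDegree ≤ s i * 1 := Nat.mul_le_mul_left _ h1
    _ = s i := mul_one _

lemma tr_mem_pow_vanishing {m : ℕ} {x : Fin n → K} {P : MvPolynomial (Fin n) K}
    (a : Fin n → K) (h : P ∈ (vanishingIdeal K ({x} : Set (Fin n → K))) ^ m) :
    tr a P ∈ (vanishingIdeal K ({x - a} : Set (Fin n → K))) ^ m := by
  have h1 : Ideal.map (tr a).toRingHom ((vanishingIdeal K ({x} : Set (Fin n → K))) ^ m) ≤
      (vanishingIdeal K ({x - a} : Set (Fin n → K))) ^ m := by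
    rw [Ideal.map_pow]
    refine Ideal.pow_right_mono ?_ m
    rw [Ideal.map_le_iff_le_comap]
    intro Q hQ
    rw [Ideal.mem_comap]
    rw [mem_vanishingIdeal_iff] at hQ ⊢
    intro y hy
    rcases hy with rfl
    show eval (x - a) (tr a Q) = 0
    rw [eval_tr, sub_add_cancel]
    exact hQ x rfl
  exact h1 (Ideal.mem_map_of_mem _ h)

open Module

variable (K n) in
/-- polynomials of total degree at most `d` -/
abbrev VS (d : ℕ) : Submodule K (MvPolynomial (Fin n) K) := restrictTotalDegree (Fin n) K d

/-- polynomials vanishing to order at least `m` at `x`, as a `K`-submodule -/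
def Jm (m : ℕ) (x : Fin n → K) : Submodule K (MvPolynomial (Fin n) K) :=
  Submodule.restrictScalars K ((vanishingIdeal K ({x} : Set (Fin n → K))) ^ m)

def WS (m d : ℕ) (S : Finset (Fin n → K)) : Submodule K (MvPolynomial (Fin n) K) :=
  (⨅ x ∈ S, Jm m x) ⊓ VS K n d

lemma WS_le_VS (m d : ℕ) (S : Finset (Fin n → K)) : WS m d S ≤ VS K n d := inf_le_right

instance (m d : ℕ) (S : Finset (Fin n → K)) : FiniteDimensional K (WS m d S) :=
  Submodule.finiteDimensional_of_le (WS_le_VS m d S)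

def uu (m d : ℕ) (S : Finset (Fin n → K)) : ℕ := finrank K (WS m d S)

lemma uu_le_fV (m d : ℕ) (S : Finset (Fin n → K)) : uu m d S ≤ finrank K (VS K n d) :=
  Submodule.finrank_mono (WS_le_VS m d S)

lemma WS_empty (m d : ℕ) : WS (K := K) (n := n) m d ∅ = VS K n d := by
  simp [WS]

lemma uu_empty (m d : ℕ) : uu (K := K) (n := n) m d ∅ = finrank K (VS K n d) := by
  rw [uu, WS_empty]

lemma WS_antitone {m d : ℕ} {S T : Finset (Fin n → K)} (h : S ⊆ T) : WS m d T ≤ WS m d S := by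
  refine inf_le_inf_right _ ?_
  exact le_iInf fun x => le_iInf fun hx => iInf_le_of_le x (iInf_le _ (h hx))

lemma uu_antitone {m d : ℕ} {S T : Finset (Fin n → K)} (h : S ⊆ T) : uu m d T ≤ uu m d S :=
  Submodule.finrank_mono (WS_antitone h)

lemma finrank_ineq {M : Type*} [AddCommGroup M] [Module K M] (B A A' : Submodule K M)
    [FiniteDimensional K B] [FiniteDimensional K A] [FiniteDimensional K A'] (h : A' ≤ A) :
    finrank K (B ⊓ A : Submodule K M) + finrank K A' ≤
      finrank K (B ⊓ A' : Submodule K M) + finrank K A := by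
  have e1 := Submodule.finrank_sup_add_finrank_inf_eq B A
  have e2 := Submodule.finrank_sup_add_finrank_inf_eq B A'
  have m1 : finrank K (B ⊔ A' : Submodule K M) ≤ finrank K (B ⊔ A : Submodule K M) :=
    Submodule.finrank_mono (sup_le_sup_left h B)
  omega

lemma WS_insert (m d : ℕ) (x : Fin n → K) (S : Finset (Fin n → K)) :
    WS m d (insert x S) = (Jm m x ⊓ VS K n d) ⊓ WS m d S := by
  ext P
  simp only [WS, Submodule.mem_inf, Submodule.mem_iInf, Finset.mem_insert]
  constructor
  · rintro ⟨h1, h2⟩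
    exact ⟨⟨h1 x (Or.inl rfl), h2⟩, fun y hy => h1 y (Or.inr hy), h2⟩
  · rintro ⟨⟨hx, h2⟩, h1, -⟩
    exact ⟨fun y hy => hy.elim (fun e => e ▸ hx) (h1 y), h2⟩

lemma uu_submodular {m d : ℕ} {S T : Finset (Fin n → K)} (h : S ⊆ T) (x : Fin n → K) :
    uu m d (insert x S) + uu m d T ≤ uu m d (insert x T) + uu m d S := by
  rw [uu, uu, uu, uu, WS_insert, WS_insert]
  exact finrank_ineq (Jm m x ⊓ VS K n d) (WS m d S) (WS m d T) (WS_antitone h)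

lemma shearer {ι : Type*} (m d t : ℕ) (Af : Finset ι) (U : Finset (Fin n → K))
    (T : ι → Finset (Fin n → K)) (hT : ∀ a ∈ Af, T a ⊆ U)
    (hcov : ∀ x ∈ U, t ≤ (Af.filter (fun a => x ∈ T a)).card) :
    t * finrank K (VS K n d) + ∑ a ∈ Af, uu m d (T a) ≤
      t * uu m d U + Af.card * finrank K (VS K n d) := by
  classical
  revert hT hcov
  induction U using Finset.induction_on generalizing T with
  | empty =>
      intro hT _
      have hsum : ∑ a ∈ Af, uu m d (T a) = Af.card * finrank K (VS K n d) := by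
        rw [Finset.sum_congr rfl fun a ha => by
          rw [Finset.subset_empty.mp (hT a ha), uu_empty]]
        rw [Finset.sum_const, smul_eq_mul]
      rw [hsum, uu_empty]
  | @insert x U' hx IH =>
      intro hT hcov
      set c := (Af.filter (fun a => x ∈ T a)).card with hc
      have hcx : t ≤ c := hcov x (Finset.mem_insert_self _ _)
      set T' : ι → Finset (Fin n → K) := fun a => (T a).erase x with hT'def
      have hTsub : ∀ a ∈ Af, T' a ⊆ U' := by
        intro a ha y hy
        rw [hT'def] at hy
        simp only [Finset.mem_erase] at hy
        rcases Finset.mem_insert.mp (hT a ha hy.2) with h | h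
        · exact absurd h hy.1
        · exact h
      have hcov' : ∀ y ∈ U', t ≤ (Af.filter (fun a => y ∈ T' a)).card := by
        intro y hy
        have hne : y ≠ x := fun e => hx (e ▸ hy)
        have heq : Af.filter (fun a => y ∈ T' a) = Af.filter (fun a => y ∈ T a) := by
          apply Finset.filter_congr
          intro a _
          simp only [hT'def, Finset.mem_erase, hne, true_and]
          tauto
        rw [heq]
        exact hcov y (Finset.mem_insert_of_mem hy)
      have IH' := IH T' hTsub hcov'
      have key : ∀ a ∈ Af, uu m d (T a) + (if x ∈ T a then uu m d U' else 0)
          ≤ uu m d (T' a) + (if x ∈ T a then uu m d (insert x U') else 0) := by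
        intro a ha
        by_cases hxa : x ∈ T a
        · simp only [hxa, if_true]
          have h1 : insert x (T' a) = T a := Finset.insert_erase hxa
          have h2 := uu_submodular (m := m) (d := d) (hTsub a ha) x
          rw [h1] at h2
          omega
        · have heq : T' a = T a := by
            rw [hT'def]
            exact Finset.erase_eq_of_notMem hxa
          simp only [hxa, if_false, add_zero, heq]
          exact le_rfl
      have S1 := Finset.sum_le_sum key
      rw [Finset.sum_add_distrib, Finset.sum_add_distrib] at S1
      have hite : ∀ z : ℕ, (∑ a ∈ Af, if x ∈ T a then z else 0) = c * z := by
        intro z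
        rw [← Finset.sum_filter, Finset.sum_const, smul_eq_mul, hc]
      rw [hite, hite] at S1
      have hmono : uu m d (insert x U') ≤ uu m d U' :=
        uu_antitone (Finset.subset_insert _ _)
      zify at IH' S1 hmono hcx ⊢
      nlinarith [mul_nonneg (sub_nonneg.mpr hcx) (sub_nonneg.mpr hmono)]

def trEquiv (a : Fin n → K) : MvPolynomial (Fin n) K ≃ₐ[K] MvPolynomial (Fin n) K :=
  AlgEquiv.ofAlgHom (tr a) (tr (-a))
    (by rw [tr_comp, add_neg_cancel, tr_zero])
    (by rw [tr_comp, neg_add_cancel, tr_zero])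

lemma tr_mem_VS {d : ℕ} (a : Fin n → K) {P : MvPolynomial (Fin n) K} (h : P ∈ VS K n d) :
    tr a P ∈ VS K n d := by
  rw [VS, mem_restrictTotalDegree] at h ⊢
  exact (totalDegree_tr_le a P).trans h

lemma mem_Jm_iff_tr (m : ℕ) (a z : Fin n → K) (Q : MvPolynomial (Fin n) K) :
    tr (-a) Q ∈ Jm m (z + a) ↔ Q ∈ Jm (K := K) m z := by
  constructor
  · intro h
    have h2 := tr_mem_pow_vanishing (P := tr (-a) Q) a h
    rw [tr_tr_cancel] at h2
    simpa [Jm, add_sub_cancel_right] using h2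
  · intro h
    have h2 := tr_mem_pow_vanishing (P := Q) (-a) h
    simpa [Jm, sub_neg_eq_add] using h2

lemma uu_translate (m d : ℕ) (a : Fin n → K) (Zf : Finset (Fin n → K)) :
    uu m d (Zf.image (· + a)) = uu m d Zf := by
  rw [uu, uu, ← LinearEquiv.finrank_map_eq (trEquiv a).toLinearEquiv (WS m d (Zf.image (· + a)))]
  have hmap : Submodule.map ((trEquiv a).toLinearEquiv : MvPolynomial (Fin n) K →ₗ[K] MvPolynomial (Fin n) K)
      (WS m d (Zf.image (· + a))) = WS m d Zf := by
    ext Q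
    rw [Submodule.mem_map_equiv]
    have hsymm : (trEquiv a).toLinearEquiv.symm Q = tr (-a) Q := rfl
    rw [hsymm]
    simp only [WS, Submodule.mem_inf, Submodule.mem_iInf]
    constructor
    · rintro ⟨h1, h2⟩
      refine ⟨fun z hz => (mem_Jm_iff_tr m a z Q).mp (h1 (z + a) (Finset.mem_image_of_mem _ hz)), ?_⟩
      have h3 := tr_mem_VS a h2
      rwa [tr_tr_cancel] at h3
    · rintro ⟨h1, h2⟩
      constructor
      · intro x hxm
        rcases Finset.mem_image.mp hxm with ⟨z, hz, rfl⟩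
        exact (mem_Jm_iff_tr m a z Q).mpr (h1 z hz)
      · exact tr_mem_VS (-a) h2
  rw [hmap]

set_option synthInstance.maxHeartbeats 1000000 in
set_option maxHeartbeats 1000000 in
lemma affineHF_add_finrank (I : Ideal (MvPolynomial (Fin n) K)) (d : ℕ) :
    affineHF I d + finrank K (Submodule.restrictScalars K I ⊓ VS K n d :
      Submodule K (MvPolynomial (Fin n) K)) = finrank K (VS K n d) := by
  have h1 : Submodule.comap (VS K n d).subtype (Submodule.restrictScalars K I)
      = Submodule.comap (VS K n d).subtype (Submodule.restrictScalars K I ⊓ VS K n d) := by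
    ext x
    simp only [Submodule.mem_comap, Submodule.mem_inf]
    exact ⟨fun h => ⟨h, x.2⟩, fun h => h.1⟩
  have h2 : affineHF I d = finrank K
      ((VS K n d) ⧸ Submodule.comap (VS K n d).subtype
        (Submodule.restrictScalars K I ⊓ VS K n d)) := by
    rw [affineHF, h1]
  have h3 : finrank K (Submodule.restrictScalars K I ⊓ VS K n d :
        Submodule K (MvPolynomial (Fin n) K))
      = finrank K (Submodule.comap (VS K n d).subtype
        (Submodule.restrictScalars K I ⊓ VS K n d)) :=
    (LinearEquiv.finrank_eq (Submodule.comapSubtypeEquivOfLe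
      (inf_le_right : Submodule.restrictScalars K I ⊓ VS K n d ≤ VS K n d))).symm
  rw [h2, h3]
  exact Submodule.finrank_quotient_add_finrank _

lemma restrictScalars_orderIdeal (m : ℕ) (X : Set (Fin n → K)) :
    (Submodule.restrictScalars K (orderIdeal m X) : Submodule K (MvPolynomial (Fin n) K))
      = ⨅ x ∈ X, Jm m x := by
  ext P
  simp only [Submodule.restrictScalars_mem, orderIdeal, Submodule.mem_iInf, Jm]

lemma HFm_add (m d : ℕ) (X : Set (Fin n → K)) :
    HFm m X d + finrank K (((⨅ x ∈ X, Jm m x) ⊓ VS K n d) :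
      Submodule K (MvPolynomial (Fin n) K)) = finrank K (VS K n d) := by
  rw [HFm, ← restrictScalars_orderIdeal]
  exact affineHF_add_finrank _ _

lemma iInf_coe_finset (m : ℕ) (S : Finset (Fin n → K)) :
    (⨅ x ∈ (↑S : Set (Fin n → K)), Jm m x) = ⨅ x ∈ S, Jm m x := by
  simp only [Finset.mem_coe]

lemma HFm_add_finset (m d : ℕ) (S : Finset (Fin n → K)) :
    HFm m (↑S : Set (Fin n → K)) d + uu m d S = finrank K (VS K n d) := by
  have h := HFm_add m d (↑S : Set (Fin n → K))
  rw [iInf_coe_finset] at h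
  exact h

lemma key_ineq [Fintype K] (m d : ℕ) (Z : Set (Fin n → K)) :
    HFm m (Set.univ : Set (Fin n → K)) d * Z.ncard ≤ HFm m Z d * Fintype.card K ^ n := by
  classical
  set Zf : Finset (Fin n → K) := (Set.toFinite Z).toFinset with hZf
  have hcoe : (↑Zf : Set (Fin n → K)) = Z := Set.Finite.coe_toFinset _
  have hncard : Z.ncard = Zf.card := by
    rw [← hcoe]
    exact Set.ncard_coe_finset _
  have hcov : ∀ x ∈ (Finset.univ : Finset (Fin n → K)),
      Zf.card ≤ (Finset.univ.filter (fun a => x ∈ Zf.image (· + a))).card := by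
    intro x _
    have heq : Finset.univ.filter (fun a => x ∈ Zf.image (· + a))
        = Zf.image (fun z => x - z) := by
      ext a
      simp only [Finset.mem_filter, Finset.mem_univ, true_and, Finset.mem_image]
      constructor
      · rintro ⟨z, hz, hza⟩
        exact ⟨z, hz, by rw [← hza, add_sub_cancel_left]⟩
      · rintro ⟨z, hz, rfl⟩
        exact ⟨z, hz, by rw [add_sub_cancel]⟩
    rw [heq, Finset.card_image_of_injective _ (fun z w h => by
      have := congrArg (fun y => x - y) h
      simpa using this)]
  have hSh := shearer m d Zf.card (Finset.univ : Finset (Fin n → K))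
      (Finset.univ : Finset (Fin n → K)) (fun a => Zf.image (· + a))
      (fun a _ => Finset.subset_univ _) hcov
  have hsum : ∑ a ∈ (Finset.univ : Finset (Fin n → K)), uu m d (Zf.image (· + a))
      = Fintype.card (Fin n → K) * uu m d Zf := by
    rw [Finset.sum_congr rfl (fun a _ => uu_translate m d a Zf), Finset.sum_const,
      smul_eq_mul, Finset.card_univ]
  rw [hsum, Finset.card_univ] at hSh
  have e1 : HFm m (Set.univ : Set (Fin n → K)) d + uu m d (Finset.univ : Finset (Fin n → K))
      = finrank K (VS K n d) := by
    have h := HFm_add_finset m d (Finset.univ : Finset (Fin n → K))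
    rwa [Finset.coe_univ] at h
  have e2 : HFm m Z d + uu m d Zf = finrank K (VS K n d) := by
    have h := HFm_add_finset m d Zf
    rwa [hcoe] at h
  have hcard : Fintype.card (Fin n → K) = Fintype.card K ^ n := by
    rw [Fintype.card_fun, Fintype.card_fin]
  rw [hcard] at hSh
  rw [hncard]
  have g1 : HFm m (Set.univ : Set (Fin n → K)) d * Zf.card
      + uu m d (Finset.univ : Finset (Fin n → K)) * Zf.card
      = finrank K (VS K n d) * Zf.card := by rw [← add_mul, e1]
  have g2 : HFm m Z d * Fintype.card K ^ n + uu m d Zf * Fintype.card K ^ n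
      = finrank K (VS K n d) * Fintype.card K ^ n := by rw [← add_mul, e2]
  zify at hSh g1 g2 ⊢
  linarith

lemma monomial_mem_pow (m : ℕ) (s : Fin n →₀ ℕ) (c : K) (h : m ≤ s.sum fun _ e => e) :
    (monomial s c : MvPolynomial (Fin n) K) ∈
      (vanishingIdeal K ({(0 : Fin n → K)} : Set (Fin n → K))) ^ m := by
  have hX : ∀ i : Fin n, (X i : MvPolynomial (Fin n) K) ∈
      vanishingIdeal K ({(0 : Fin n → K)} : Set (Fin n → K)) := by
    intro i
    rw [mem_vanishingIdeal_iff]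
    rintro y rfl
    simp
  have h1 : (monomial s (1 : K) : MvPolynomial (Fin n) K) ∈
      (vanishingIdeal K ({(0 : Fin n → K)} : Set (Fin n → K))) ^ (s.sum fun _ e => e) := by
    rw [← prod_X_pow_eq_monomial]
    have h2 : (vanishingIdeal K ({(0 : Fin n → K)} : Set (Fin n → K))) ^ (s.sum fun _ e => e)
        = ∏ i ∈ s.support,
            (vanishingIdeal K ({(0 : Fin n → K)} : Set (Fin n → K))) ^ (s i) :=
      (Finset.prod_pow_eq_pow_sum _ _ _).symm
    rw [h2]
    exact Ideal.prod_mem_prod (fun i _ => Ideal.pow_mem_pow (hX i) _)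
  have h3 := Ideal.pow_le_pow_right h h1
  have h4 : (monomial s c : MvPolynomial (Fin n) K) = C c * monomial s 1 := by
    rw [C_mul_monomial, mul_one]
  rw [h4]
  exact Ideal.mul_mem_left _ _ h3

lemma VS_le_sup (m d : ℕ) :
    VS K n d ≤ (Jm m (0 : Fin n → K) ⊓ VS K n d) ⊔ (restrictTotalDegree (Fin n) K (m - 1)) := by
  intro P hP
  have hdeg : P.totalDegree ≤ d := (mem_restrictTotalDegree _ _ _).mp hP
  rw [P.as_sum, ← Finset.sum_filter_add_sum_filter_not P.support
    (fun s => m ≤ s.sum fun _ e => e)]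
  apply Submodule.add_mem
  · refine Submodule.mem_sup_left (Submodule.sum_mem _ ?_)
    intro s hs
    rw [Finset.mem_filter] at hs
    refine Submodule.mem_inf.mpr ⟨?_, ?_⟩
    · show (monomial s (coeff s P) : MvPolynomial (Fin n) K) ∈
        (vanishingIdeal K ({(0 : Fin n → K)} : Set (Fin n → K))) ^ m
      exact monomial_mem_pow m s _ hs.2
    · rw [mem_restrictTotalDegree]
      exact le_trans (totalDegree_monomial_le _ _) (le_trans (le_totalDegree hs.1) hdeg)
  · refine Submodule.mem_sup_right (Submodule.sum_mem _ ?_)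
    intro s hs
    rw [Finset.mem_filter] at hs
    rw [mem_restrictTotalDegree]
    refine le_trans (totalDegree_monomial_le _ _) ?_
    have hh := hs.2
    have hid : (s.sum fun _ => (id : ℕ → ℕ)) = s.sum fun _ e => e := rfl
    omega

def pad (e : ℕ) (s : Fin n →₀ ℕ) : Sym (Fin (n + 1)) e :=
  if h : (s.sum fun _ x => x) ≤ e then
    ⟨Multiset.map Fin.castSucc s.toMultiset
      + Multiset.replicate (e - s.sum fun _ x => x) (Fin.last n), by
      simp only [Multiset.card_add, Multiset.card_map, Multiset.card_replicate,
        Finsupp.card_toMultiset]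
      have hid : (s.sum fun _ => (id : ℕ → ℕ)) = s.sum fun _ x => x := rfl
      omega⟩
  else Sym.replicate e (Fin.last n)

lemma pad_inj (e : ℕ) {s t : Fin n →₀ ℕ} (hs : (s.sum fun _ x => x) ≤ e)
    (ht : (t.sum fun _ x => x) ≤ e) (h : pad e s = pad e t) : s = t := by
  simp only [pad, hs, ht, ↓reduceDIte] at h
  have h1 := congrArg Subtype.val h
  simp only at h1
  ext i
  have h2 := congrArg (Multiset.count (Fin.castSucc i)) h1
  have hne : Fin.last n ≠ Fin.castSucc i := (Fin.castSucc_lt_last i).ne'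
  rw [Multiset.count_add, Multiset.count_add, Multiset.count_replicate, if_neg hne,
    Multiset.count_replicate, if_neg hne,
    Multiset.count_map_eq_count' _ _ (Fin.castSucc_injective n),
    Multiset.count_map_eq_count' _ _ (Fin.castSucc_injective n)] at h2
  simpa [Finsupp.count_toMultiset] using h2

set_option maxHeartbeats 1000000 in
set_option synthInstance.maxHeartbeats 400000 in
lemma finrank_restrictTotalDegree_le (e : ℕ) :
    finrank K (restrictTotalDegree (Fin n) K e) ≤ (n + e).choose e := by
  classical
  set T0 : Finset (Fin n →₀ ℕ) := Finset.univ.image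
    (fun f : Fin n → Fin (e + 1) => Finsupp.equivFunOnFinite.symm (fun i => ((f i : ℕ)))) with hT0
  set T : Finset (Fin n →₀ ℕ) := T0.filter (fun s => (s.sum fun _ x => x) ≤ e) with hT
  have hmemT : ∀ s : Fin n →₀ ℕ, (s.sum fun _ x => x) ≤ e → s ∈ T := by
    intro s hsum
    rw [hT, Finset.mem_filter]
    refine ⟨?_, hsum⟩
    rw [hT0, Finset.mem_image]
    have hbound : ∀ i, s i < e + 1 := by
      intro i
      have h1 : s i ≤ s.sum fun _ x => x := by
        by_cases h : i ∈ s.support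
        · exact Finset.single_le_sum (f := fun j => s j) (fun _ _ => Nat.zero_le _) h
        · simp [Finsupp.notMem_support_iff.mp h]
      omega
    refine ⟨fun i => ⟨s i, hbound i⟩, Finset.mem_univ _, ?_⟩
    ext i
    simp [Finsupp.equivFunOnFinite]
  have hspan : restrictTotalDegree (Fin n) K e ≤ Submodule.span K
      ((T.image (fun s => (monomial s (1 : K) : MvPolynomial (Fin n) K))) : Set _) := by
    intro P hP
    rw [P.as_sum]
    apply Submodule.sum_mem
    intro s hs
    have h1 : (monomial s (coeff s P) : MvPolynomial (Fin n) K)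
        = (coeff s P) • (monomial s (1 : K) : MvPolynomial (Fin n) K) := by
      rw [smul_monomial, smul_eq_mul, mul_one]
    rw [h1]
    apply Submodule.smul_mem
    apply Submodule.subset_span
    exact Finset.mem_coe.mpr (Finset.mem_image_of_mem _ (hmemT s
      (le_trans (le_totalDegree hs) ((mem_restrictTotalDegree _ _ _).mp hP))))
  have h2 : finrank K (restrictTotalDegree (Fin n) K e) ≤
      finrank K (Submodule.span K
        ((T.image (fun s => (monomial s (1 : K) : MvPolynomial (Fin n) K))) : Set _)) :=
    Submodule.finrank_mono hspan
  refine le_trans h2 (le_trans (finrank_span_finset_le_card _) ?_)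
  refine le_trans (Finset.card_image_le) ?_
  have hcount : T.card ≤ Fintype.card (Sym (Fin (n + 1)) e) := by
    refine Finset.card_le_card_of_injOn (pad e) (fun s _ => Finset.mem_univ _) ?_
    intro s hsT t htT hp
    rw [hT] at hsT htT
    exact pad_inj e (Finset.mem_filter.mp hsT).2 (Finset.mem_filter.mp htT).2 hp
  refine le_trans hcount ?_
  rw [Sym.card_sym_eq_choose, Fintype.card_fin]
  have he : n + 1 + e - 1 = n + e := by omega
  rw [he]

lemma fV_le_uu_singleton (m d : ℕ) (hm : 1 ≤ m) (y : Fin n → K) :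
    finrank K (VS K n d) ≤ uu m d {y} + (m + n - 1).choose n := by
  have h0 : uu m d {y} = uu m d {(0 : Fin n → K)} := by
    have h := uu_translate m d y {(0 : Fin n → K)}
    rw [Finset.image_singleton] at h
    simpa using h
  rw [h0]
  have h1 : WS m d {(0 : Fin n → K)} = Jm m (0 : Fin n → K) ⊓ VS K n d := by
    rw [WS, Finset.iInf_singleton]
  haveI : FiniteDimensional K (Jm m (0 : Fin n → K) ⊓ VS K n d : Submodule K (MvPolynomial (Fin n) K)) :=
    Submodule.finiteDimensional_of_le inf_le_right
  have h3 : finrank K (VS K n d) ≤ finrank K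
      ((Jm m (0 : Fin n → K) ⊓ VS K n d) ⊔ restrictTotalDegree (Fin n) K (m - 1) :
        Submodule K (MvPolynomial (Fin n) K)) :=
    Submodule.finrank_mono (VS_le_sup m d)
  have h4 := Submodule.finrank_sup_add_finrank_inf_eq
    (Jm m (0 : Fin n → K) ⊓ VS K n d) (restrictTotalDegree (Fin n) K (m - 1))
  have h5 := finrank_restrictTotalDegree_le (K := K) (n := n) (m - 1)
  have h6 : (n + (m - 1)).choose (m - 1) = (m + n - 1).choose n := by
    have e2 : m + n - 1 - (m - 1) = n := by omega
    have hc := Nat.choose_symm (show m - 1 ≤ m + n - 1 by omega)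
    rw [e2] at hc
    have e1 : n + (m - 1) = m + n - 1 := by omega
    rw [e1]
    exact hc.symm
  rw [uu, h1]
  omega

lemma fV_le_uu_add (m d : ℕ) (hm : 1 ≤ m) (Yf : Finset (Fin n → K)) :
    finrank K (VS K n d) ≤ uu m d Yf + (m + n - 1).choose n * Yf.card := by
  rcases Finset.eq_empty_or_nonempty Yf with rfl | ⟨y0, hy0⟩
  · rw [uu_empty]
    exact Nat.le_add_right _ _
  have hSh := shearer m d 1 Yf Yf (fun y => {y})
    (fun y hy => Finset.singleton_subset_iff.mpr hy)
    (fun x hx => Finset.card_pos.mpr ⟨x, Finset.mem_filter.mpr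
      ⟨hx, Finset.mem_singleton_self x⟩⟩)
  have hsum : Yf.card * finrank K (VS K n d) ≤
      (∑ y ∈ Yf, uu m d {y}) + Yf.card * ((m + n - 1).choose n) := by
    calc Yf.card * finrank K (VS K n d) = ∑ _y ∈ Yf, finrank K (VS K n d) := by
          rw [Finset.sum_const, smul_eq_mul]
      _ ≤ ∑ y ∈ Yf, (uu m d {y} + (m + n - 1).choose n) :=
          Finset.sum_le_sum (fun y _ => fV_le_uu_singleton m d hm y)
      _ = (∑ y ∈ Yf, uu m d {y}) + Yf.card * ((m + n - 1).choose n) := by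
          rw [Finset.sum_add_distrib, Finset.sum_const, smul_eq_mul]
  zify at hSh hsum ⊢
  linarith

lemma HFm_le_choose_mul (m d : ℕ) (hm : 1 ≤ m) (Y : Set (Fin n → K)) (hY : Y.Finite) :
    HFm m Y d ≤ (m + n - 1).choose n * Y.ncard := by
  classical
  set Yf := hY.toFinset with hYf
  have hcoe : (↑Yf : Set (Fin n → K)) = Y := hY.coe_toFinset
  have hncard : Y.ncard = Yf.card := by
    rw [← hcoe]
    exact Set.ncard_coe_finset _
  have e1 : HFm m Y d + uu m d Yf = finrank K (VS K n d) := by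
    have h := HFm_add_finset m d Yf
    rwa [hcoe] at h
  have h2 := fV_le_uu_add m d hm Yf
  rw [hncard]
  omega

lemma HFm_cl_le (d l m : ℕ) (Y : Set (Fin n → K)) :
    HFm l (clDegMult d l m Y) d ≤ HFm m Y d := by
  have h1 : Submodule.restrictScalars K (orderIdeal m Y) ⊓ VS K n d ≤
      Submodule.restrictScalars K (orderIdeal l (clDegMult d l m Y)) ⊓ VS K n d := by
    rintro P ⟨hP1, hP2⟩
    refine ⟨?_, hP2⟩
    show P ∈ orderIdeal l (clDegMult d l m Y)
    rw [orderIdeal]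
    simp only [Submodule.mem_iInf]
    intro x hx
    exact hx P ((mem_restrictTotalDegree _ _ _).mp hP2) hP1
  haveI : FiniteDimensional K
      (Submodule.restrictScalars K (orderIdeal l (clDegMult d l m Y)) ⊓ VS K n d :
        Submodule K (MvPolynomial (Fin n) K)) :=
    Submodule.finiteDimensional_of_le inf_le_right
  have e1 := affineHF_add_finrank (orderIdeal m Y) d
  have e2 := affineHF_add_finrank (orderIdeal l (clDegMult d l m Y)) d
  have h2 := Submodule.finrank_mono h1
  rw [HFm, HFm]
  omega

end S19

/-- `HF^ℓ(F_q^n, d) · |cl_d^{ℓ,m}(Y)| ≤ q^n · C(m+n-1, n) · |Y|`;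
in particular `HF^m(F_q^n, d) · |Z| ≤ HF^m(Z, d) · q^n` for every `Z ⊆ F_q^n`. -/
theorem statement19 (K : Type*) [Field K] [Fintype K] (q n m l d : ℕ)
    (hq : Fintype.card K = q) (hn : 1 ≤ n) (hm : 1 ≤ m) (hl : 1 ≤ l)
    (Y : Set (Fin n → K)) :
    HFm l (Set.univ : Set (Fin n → K)) d * (clDegMult d l m Y).ncard ≤
      q ^ n * (m + n - 1).choose n * Y.ncard ∧
    ∀ Z : Set (Fin n → K),
      HFm m (Set.univ : Set (Fin n → K)) d * Z.ncard ≤ HFm m Z d * q ^ n := by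
  subst hq
  constructor
  · calc HFm l (Set.univ : Set (Fin n → K)) d * (clDegMult d l m Y).ncard
        ≤ HFm l (clDegMult d l m Y) d * Fintype.card K ^ n := S19.key_ineq l d _
      _ ≤ HFm m Y d * Fintype.card K ^ n :=
          Nat.mul_le_mul_right _ (S19.HFm_cl_le d l m Y)
      _ ≤ ((m + n - 1).choose n * Y.ncard) * Fintype.card K ^ n :=
          Nat.mul_le_mul_right _ (S19.HFm_le_choose_mul m d hm Y (Set.toFinite Y))
      _ = Fintype.card K ^ n * (m + n - 1).choose n * Y.ncard := by ring
  · intro Z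
    exact S19.key_ineq m d Z

end
end
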